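/- arXiv:2602.06461 — 5 statements merged into one kernel-verified Lean document; each statement's English description precedes it below -/
import Mathlib

section
/- Assume the abstract setting described in the context. Let μ > 0 satisfy M·c·μ^{ρ−1}·B ≤ 1/4. Suppose g₁, g₂ : (0,∞) → V are continuous and u₁, u₂ : (0,∞) → V are mild solutions with forcings g₁ and g₂ respectively on (0,∞), with sup_{t>0} t^{αε}‖u₁(t)‖_V ≤ μ and sup_{t>0} t^{αε}‖u₂(t)‖_V ≤ μ. Then sup_{t>0} t^{αε}‖u₁(t) − u₂(t)‖_V ≤ 2 · sup_{t>0} t^{αε}‖g₁(t) − g₂(t)‖_V. -/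
open MeasureTheory Set Filter Topology intervalIntegral
open scoped ENNReal

/-- `u` is a mild solution with forcing `g` on the set `S ⊆ (0,∞)`: `u` is continuous on `S`
and for every `t ∈ S` the Bochner integral `∫₀^t R(t-s) f(u(s)) ds` converges and
`u t = g t + ∫₀^t R(t-s) f(u(s)) ds`. -/
def IsMildSolutionOn {V W : Type*} [NormedAddCommGroup V] [NormedSpace ℝ V]
    [NormedAddCommGroup W] [NormedSpace ℝ W]
    (R : ℝ → W →L[ℝ] V) (f : V → W) (g u : ℝ → V) (S : Set ℝ) : Prop :=
  ContinuousOn u S ∧ ∀ t ∈ S,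
    IntervalIntegrable (fun s => R (t - s) (f (u s))) volume 0 t ∧
    u t = g t + ∫ s in (0:ℝ)..t, R (t - s) (f (u s))

/-- Kernel scaling: integrability and value of `∫₀^t (t-s)^(a-1) s^(-b) ds`. -/
theorem kernel_scaling (a b : ℝ) {F : ℝ → ℝ}
    (hF : F = fun s => (1 - s) ^ (a - 1) * s ^ (-b))
    (hBint : IntervalIntegrable F volume 0 1) (t : ℝ) (ht : 0 < t) :
    IntervalIntegrable (fun s => (t - s) ^ (a - 1) * s ^ (-b)) volume 0 t ∧
    (∫ s in (0:ℝ)..t, (t - s) ^ (a - 1) * s ^ (-b)) =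
      t ^ (a - b) * ∫ s in (0:ℝ)..1, F s := by
  have hEq : EqOn (fun s => (t - s) ^ (a - 1) * s ^ (-b))
      (fun s => t ^ (a - 1 - b) * F (s / t)) (Set.uIcc 0 t) := by
    intro s hs
    rw [uIcc_of_le ht.le] at hs
    obtain ⟨hs0, hst⟩ := hs
    have h1 : (1 : ℝ) - s / t = (t - s) / t := by field_simp
    have h2 : t ^ (a - 1 - b) = t ^ (a - 1) * t ^ (-b) := by
      rw [← Real.rpow_add ht]; ring_nf
    have ht1 : (0:ℝ) < t ^ (a - 1) := Real.rpow_pos_of_pos ht _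
    have ht2 : (0:ℝ) < t ^ (-b) := Real.rpow_pos_of_pos ht _
    simp only [hF, h1]
    rw [Real.div_rpow (by linarith) ht.le, Real.div_rpow hs0 ht.le, h2]
    field_simp
  have hint2 : IntervalIntegrable (fun s => F (s / t)) volume 0 t := by
    have h := hBint.comp_mul_right (c := t⁻¹)
    simp only [zero_div, one_div, inv_inv] at h
    simpa [div_eq_mul_inv] using h
  constructor
  · refine (hint2.const_mul (t ^ (a - 1 - b))).congr ?_
    exact (fun s hs => (hEq (uIoc_subset_uIcc hs)).symm)
  · rw [intervalIntegral.integral_congr hEq,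
      intervalIntegral.integral_const_mul,
      intervalIntegral.integral_comp_div (c := t) F ht.ne']
    rw [zero_div, div_self ht.ne', smul_eq_mul]
    rw [← mul_assoc]
    congr 1
    rw [show a - b = (a - 1 - b) + 1 by ring, Real.rpow_add ht, Real.rpow_one]

set_option maxHeartbeats 1000000 in
/-- **Global continuous-dependence estimate of Theorem 1.2.**
If `u₁, u₂` are mild solutions on `(0,∞)` with forcings `g₁, g₂` and weighted norms `≤ μ`,
where `M c μ^{ρ-1} B ≤ 1/4`, then
`sup_{t>0} t^{αε}‖u₁ t - u₂ t‖ ≤ 2 sup_{t>0} t^{αε}‖g₁ t - g₂ t‖`. -/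
theorem continuous_dependence_global
    {V W : Type*} [NormedAddCommGroup V] [NormedSpace ℝ V] [CompleteSpace V]
    [NormedAddCommGroup W] [NormedSpace ℝ W] [CompleteSpace W]
    (ρ α ε M c B : ℝ)
    (hρ : 1 < ρ) (hα : 1 < α) (hε : 0 < ε) (hαρε : α * ρ * ε < 1)
    (hM : 0 < M) (hc : 0 < c)
    (R : ℝ → W →L[ℝ] V)
    (hRcont : ∀ w : W, ContinuousOn (fun t => R t w) (Ioi (0:ℝ)))
    (hRbound : ∀ t > (0:ℝ), ∀ w : W, ‖R t w‖ ≤ M * t ^ (α * (ρ - 1) * ε - 1) * ‖w‖)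
    (f : V → W) (hf0 : f 0 = 0)
    (hf : ∀ x y : V, ‖f x - f y‖ ≤ c * (‖x‖ ^ (ρ - 1) + ‖y‖ ^ (ρ - 1)) * ‖x - y‖)
    (hBint : IntervalIntegrable
      (fun s => (1 - s) ^ (α * (ρ - 1) * ε - 1) * s ^ (-(α * ρ * ε))) volume 0 1)
    (hB : B = ∫ s in (0:ℝ)..1, (1 - s) ^ (α * (ρ - 1) * ε - 1) * s ^ (-(α * ρ * ε)))
    (μ : ℝ) (hμ : 0 < μ) (hsmall : M * c * μ ^ (ρ - 1) * B ≤ 1 / 4)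
    (g₁ g₂ : ℝ → V) (hg₁ : ContinuousOn g₁ (Ioi 0)) (hg₂ : ContinuousOn g₂ (Ioi 0))
    (u₁ u₂ : ℝ → V)
    (hu₁ : IsMildSolutionOn R f g₁ u₁ (Ioi 0))
    (hu₂ : IsMildSolutionOn R f g₂ u₂ (Ioi 0))
    (hu₁bdd : ∀ t > (0:ℝ), t ^ (α * ε) * ‖u₁ t‖ ≤ μ)
    (hu₂bdd : ∀ t > (0:ℝ), t ^ (α * ε) * ‖u₂ t‖ ≤ μ) :
    sSup ((fun t => t ^ (α * ε) * ‖u₁ t - u₂ t‖) '' Ioi 0) ≤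
      2 * sSup ((fun t => t ^ (α * ε) * ‖g₁ t - g₂ t‖) '' Ioi 0) := by
  obtain ⟨hu₁c, hu₁eq⟩ := hu₁
  obtain ⟨hu₂c, hu₂eq⟩ := hu₂
  set a := α * (ρ - 1) * ε with ha_def
  set b := α * ρ * ε with hb_def
  set δ := α * ε with hδ_def
  have hδpos : 0 < δ := by
    have : 0 < α := by linarith
    positivity
  have hab : a - b = -δ := by rw [ha_def, hb_def, hδ_def]; ring
  have hμρ : 0 < μ ^ (ρ - 1) := Real.rpow_pos_of_pos hμ _
  -- the kernel
  have hker := fun t ht => kernel_scaling a b rfl hBint t ht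
  -- nonnegativity of B
  have hBnonneg : 0 ≤ B := by
    rw [hB]
    apply intervalIntegral.integral_nonneg (by norm_num)
    intro s hs
    have h1 : (0:ℝ) ≤ 1 - s := by linarith [hs.2]
    have h2 : (0:ℝ) ≤ s := hs.1
    positivity
  -- the weighted sup of the difference
  set Φ := sSup ((fun t => t ^ δ * ‖u₁ t - u₂ t‖) '' Ioi 0) with hΦ_def
  set Γ := sSup ((fun t => t ^ δ * ‖g₁ t - g₂ t‖) '' Ioi 0) with hΓ_def
  have hΦub : ∀ y ∈ (fun t => t ^ δ * ‖u₁ t - u₂ t‖) '' Ioi 0, y ≤ 2 * μ := by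
    rintro y ⟨t, ht, rfl⟩
    rw [mem_Ioi] at ht
    have h1 := hu₁bdd t ht
    have h2 := hu₂bdd t ht
    have htδ : (0:ℝ) < t ^ δ := Real.rpow_pos_of_pos ht _
    have h3 := mul_le_mul_of_nonneg_left (norm_sub_le (u₁ t) (u₂ t)) htδ.le
    rw [mul_add] at h3
    show t ^ δ * ‖u₁ t - u₂ t‖ ≤ 2 * μ
    linarith
  have hΦbdd : BddAbove ((fun t => t ^ δ * ‖u₁ t - u₂ t‖) '' Ioi 0) := ⟨2 * μ, hΦub⟩
  have hΦmem : ∀ t > (0:ℝ), t ^ δ * ‖u₁ t - u₂ t‖ ≤ Φ := fun t ht =>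
    le_csSup hΦbdd (Set.mem_image_of_mem _ (mem_Ioi.mpr ht))
  have hΦ0 : 0 ≤ Φ := by
    have h := hΦmem 1 one_pos
    have : (0:ℝ) ≤ (1:ℝ) ^ δ * ‖u₁ 1 - u₂ 1‖ := by positivity
    linarith
  -- inverse power cancellation
  have hcancel : ∀ s : ℝ, 0 < s → s ^ δ * s ^ (-δ) = 1 := by
    intro s hs
    rw [← Real.rpow_add hs]; simp
  -- pointwise bound for the norm of u i
  have hubdd : ∀ (u : ℝ → V), (∀ t > (0:ℝ), t ^ δ * ‖u t‖ ≤ μ) →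
      ∀ s > (0:ℝ), ‖u s‖ ≤ μ * s ^ (-δ) := by
    intro u hu s hs
    have h := hu s hs
    have hpos : (0:ℝ) < s ^ (-δ) := Real.rpow_pos_of_pos hs _
    have hpos2 : (0:ℝ) < s ^ δ := Real.rpow_pos_of_pos hs _
    have hc2 := hcancel s hs
    calc ‖u s‖ = (s ^ δ * s ^ (-δ)) * ‖u s‖ := by rw [hc2, one_mul]
      _ = s ^ (-δ) * (s ^ δ * ‖u s‖) := by ring
      _ ≤ s ^ (-δ) * μ := mul_le_mul_of_nonneg_left h hpos.le
      _ = μ * s ^ (-δ) := by ring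
  have hdiffbdd : ∀ s > (0:ℝ), ‖u₁ s - u₂ s‖ ≤ Φ * s ^ (-δ) := by
    intro s hs
    have h := hΦmem s hs
    have hpos : (0:ℝ) < s ^ (-δ) := Real.rpow_pos_of_pos hs _
    have hc2 := hcancel s hs
    calc ‖u₁ s - u₂ s‖ = (s ^ δ * s ^ (-δ)) * ‖u₁ s - u₂ s‖ := by rw [hc2, one_mul]
      _ = s ^ (-δ) * (s ^ δ * ‖u₁ s - u₂ s‖) := by ring
      _ ≤ s ^ (-δ) * Φ := mul_le_mul_of_nonneg_left h hpos.le
      _ = Φ * s ^ (-δ) := by ring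
  -- key estimate on the integral term
  set C := 2 * M * c * μ ^ (ρ - 1) * Φ with hC_def
  have hCnonneg : 0 ≤ C := by positivity
  have hkey : ∀ t > (0:ℝ),
      IntervalIntegrable (fun s => R (t - s) (f (u₁ s) - f (u₂ s))) volume 0 t ∧
      ‖∫ s in (0:ℝ)..t, R (t - s) (f (u₁ s) - f (u₂ s))‖ ≤ C * B * t ^ (-δ) := by
    intro t ht
    have hint : IntervalIntegrable (fun s => R (t - s) (f (u₁ s) - f (u₂ s))) volume 0 t := by
      have h := ((hu₁eq t (mem_Ioi.mpr ht)).1).sub ((hu₂eq t (mem_Ioi.mpr ht)).1)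
      refine h.congr (fun s _ => ?_)
      simp [map_sub]
    refine ⟨hint, ?_⟩
    have hKint : IntervalIntegrable (fun s => C * ((t - s) ^ (a - 1) * s ^ (-b))) volume 0 t :=
      (hker t ht).1.const_mul C
    have hae : ∀ᵐ s ∂volume.restrict (Set.uIoc 0 t),
        ‖R (t - s) (f (u₁ s) - f (u₂ s))‖ ≤ C * ((t - s) ^ (a - 1) * s ^ (-b)) := by
      rw [uIoc_of_le ht.le, ← Measure.restrict_congr_set Ioo_ae_eq_Ioc]
      filter_upwards [ae_restrict_mem measurableSet_Ioo] with s hs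
      obtain ⟨hs0, hst⟩ := hs
      have hts : (0:ℝ) < t - s := by linarith
      have step1 := hRbound (t - s) hts (f (u₁ s) - f (u₂ s))
      have step2 := hf (u₁ s) (u₂ s)
      have hn1 : ‖u₁ s‖ ^ (ρ - 1) ≤ μ ^ (ρ - 1) * s ^ (-δ * (ρ - 1)) := by
        calc ‖u₁ s‖ ^ (ρ - 1) ≤ (μ * s ^ (-δ)) ^ (ρ - 1) :=
              Real.rpow_le_rpow (norm_nonneg _) (hubdd u₁ hu₁bdd s hs0) (by linarith)
          _ = μ ^ (ρ - 1) * s ^ (-δ * (ρ - 1)) := by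
              rw [Real.mul_rpow hμ.le (Real.rpow_pos_of_pos hs0 _).le,
                ← Real.rpow_mul hs0.le]
      have hn2 : ‖u₂ s‖ ^ (ρ - 1) ≤ μ ^ (ρ - 1) * s ^ (-δ * (ρ - 1)) := by
        calc ‖u₂ s‖ ^ (ρ - 1) ≤ (μ * s ^ (-δ)) ^ (ρ - 1) :=
              Real.rpow_le_rpow (norm_nonneg _) (hubdd u₂ hu₂bdd s hs0) (by linarith)
          _ = μ ^ (ρ - 1) * s ^ (-δ * (ρ - 1)) := by
              rw [Real.mul_rpow hμ.le (Real.rpow_pos_of_pos hs0 _).le,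
                ← Real.rpow_mul hs0.le]
      have hd := hdiffbdd s hs0
      have hsum : ‖u₁ s‖ ^ (ρ - 1) + ‖u₂ s‖ ^ (ρ - 1) ≤
          2 * (μ ^ (ρ - 1) * s ^ (-δ * (ρ - 1))) := by linarith
      have hsρ : (0:ℝ) ≤ s ^ (-δ * (ρ - 1)) := (Real.rpow_pos_of_pos hs0 _).le
      have hP1 : ‖f (u₁ s) - f (u₂ s)‖ ≤
          c * (2 * (μ ^ (ρ - 1) * s ^ (-δ * (ρ - 1)))) * (Φ * s ^ (-δ)) := by
        have hprod := mul_le_mul hsum hd (norm_nonneg _) (by positivity)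
        calc ‖f (u₁ s) - f (u₂ s)‖
            ≤ c * (‖u₁ s‖ ^ (ρ - 1) + ‖u₂ s‖ ^ (ρ - 1)) * ‖u₁ s - u₂ s‖ := step2
          _ ≤ c * (2 * (μ ^ (ρ - 1) * s ^ (-δ * (ρ - 1)))) * (Φ * s ^ (-δ)) := by
              rw [mul_assoc, mul_assoc]
              exact mul_le_mul_of_nonneg_left hprod hc.le
      have hMt : (0:ℝ) ≤ M * (t - s) ^ (a - 1) := by positivity
      have hss : s ^ (-δ * (ρ - 1)) * s ^ (-δ) = s ^ (-b) := by
        rw [← Real.rpow_add hs0]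
        congr 1
        rw [hb_def, hδ_def]; ring
      calc ‖R (t - s) (f (u₁ s) - f (u₂ s))‖
          ≤ M * (t - s) ^ (a - 1) * ‖f (u₁ s) - f (u₂ s)‖ := step1
        _ ≤ M * (t - s) ^ (a - 1) *
            (c * (2 * (μ ^ (ρ - 1) * s ^ (-δ * (ρ - 1)))) * (Φ * s ^ (-δ))) :=
            mul_le_mul_of_nonneg_left hP1 hMt
        _ = C * ((t - s) ^ (a - 1) * s ^ (-b)) := by rw [hC_def, ← hss]; ring
    have hnorm := intervalIntegral.norm_integral_le_abs_of_norm_le hae hKint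
    have hKval : (∫ s in (0:ℝ)..t, C * ((t - s) ^ (a - 1) * s ^ (-b))) =
        C * (t ^ (-δ) * B) := by
      rw [intervalIntegral.integral_const_mul, (hker t ht).2, ← hab, hB]
    rw [hKval] at hnorm
    have htδ : (0:ℝ) ≤ t ^ (-δ) := (Real.rpow_pos_of_pos ht _).le
    have habs : |C * (t ^ (-δ) * B)| = C * (t ^ (-δ) * B) := abs_of_nonneg (by positivity)
    rw [habs] at hnorm
    linarith [hnorm]
  -- the splitting identity
  have hsplit : ∀ t > (0:ℝ), u₁ t - u₂ t = (g₁ t - g₂ t) +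
      ∫ s in (0:ℝ)..t, R (t - s) (f (u₁ s) - f (u₂ s)) := by
    intro t ht
    have e1 := (hu₁eq t (mem_Ioi.mpr ht)).2
    have e2 := (hu₂eq t (mem_Ioi.mpr ht)).2
    have hsub : (∫ s in (0:ℝ)..t, R (t - s) (f (u₁ s) - f (u₂ s))) =
        (∫ s in (0:ℝ)..t, R (t - s) (f (u₁ s))) - ∫ s in (0:ℝ)..t, R (t - s) (f (u₂ s)) := by
      rw [← intervalIntegral.integral_sub (hu₁eq t (mem_Ioi.mpr ht)).1
        (hu₂eq t (mem_Ioi.mpr ht)).1]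
      simp [map_sub]
    rw [hsub, e1, e2]
    abel
  -- C * B ≤ Φ / 2
  have hCB : C * B ≤ Φ / 2 := by
    have h := mul_le_mul_of_nonneg_right hsmall hΦ0
    rw [hC_def]
    calc 2 * M * c * μ ^ (ρ - 1) * Φ * B = 2 * (M * c * μ ^ (ρ - 1) * B * Φ) := by ring
      _ ≤ 2 * (1 / 4 * Φ) := by linarith
      _ = Φ / 2 := by ring
  -- bound for the weighted g difference: Γ-set is bounded above
  have hGbdd : BddAbove ((fun t => t ^ δ * ‖g₁ t - g₂ t‖) '' Ioi 0) := by
    refine ⟨2 * μ + Φ / 2, ?_⟩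
    rintro y ⟨t, ht, rfl⟩
    rw [mem_Ioi] at ht
    have hs := hsplit t ht
    have hk := (hkey t ht).2
    have htδ : (0:ℝ) < t ^ δ := Real.rpow_pos_of_pos ht _
    have hc2 := hcancel t ht
    have hg : ‖g₁ t - g₂ t‖ ≤ ‖u₁ t - u₂ t‖ +
        ‖∫ s in (0:ℝ)..t, R (t - s) (f (u₁ s) - f (u₂ s))‖ := by
      have : g₁ t - g₂ t = (u₁ t - u₂ t) -
          ∫ s in (0:ℝ)..t, R (t - s) (f (u₁ s) - f (u₂ s)) := by rw [hs]; abel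
      rw [this]
      exact norm_sub_le _ _
    have ha1 := mul_le_mul_of_nonneg_left hg htδ.le
    rw [mul_add] at ha1
    have hb1 := mul_le_mul_of_nonneg_left hk htδ.le
    have h2 : t ^ δ * (C * B * t ^ (-δ)) = C * B := by
      rw [show t ^ δ * (C * B * t ^ (-δ)) = (t ^ δ * t ^ (-δ)) * (C * B) by ring, hc2, one_mul]
    rw [h2] at hb1
    have h3 := hΦmem t ht
    have hΦ2μ : Φ ≤ 2 * μ := csSup_le
      ⟨_, Set.mem_image_of_mem (fun t => t ^ δ * ‖u₁ t - u₂ t‖) (mem_Ioi.mpr one_pos)⟩ hΦub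
    show t ^ δ * ‖g₁ t - g₂ t‖ ≤ 2 * μ + Φ / 2
    linarith
  have hGmem : ∀ t > (0:ℝ), t ^ δ * ‖g₁ t - g₂ t‖ ≤ Γ := fun t ht =>
    le_csSup hGbdd (Set.mem_image_of_mem _ (mem_Ioi.mpr ht))
  -- main pointwise estimate
  have hmain : ∀ t > (0:ℝ), t ^ δ * ‖u₁ t - u₂ t‖ ≤ Γ + Φ / 2 := by
    intro t ht
    have hs := hsplit t ht
    have hk := (hkey t ht).2
    have htδ : (0:ℝ) < t ^ δ := Real.rpow_pos_of_pos ht _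
    have hc2 := hcancel t ht
    have hn : ‖u₁ t - u₂ t‖ ≤ ‖g₁ t - g₂ t‖ +
        ‖∫ s in (0:ℝ)..t, R (t - s) (f (u₁ s) - f (u₂ s))‖ := by
      rw [hs]; exact norm_add_le _ _
    have ha1 := mul_le_mul_of_nonneg_left hn htδ.le
    rw [mul_add] at ha1
    have hb1 := mul_le_mul_of_nonneg_left hk htδ.le
    have h2 : t ^ δ * (C * B * t ^ (-δ)) = C * B := by
      rw [show t ^ δ * (C * B * t ^ (-δ)) = (t ^ δ * t ^ (-δ)) * (C * B) by ring, hc2, one_mul]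
    rw [h2] at hb1
    have h3 := hGmem t ht
    linarith
  -- conclusion
  have hΓ0 : 0 ≤ Γ := by
    have h := hGmem 1 one_pos
    have : (0:ℝ) ≤ (1:ℝ) ^ δ * ‖g₁ 1 - g₂ 1‖ := by positivity
    linarith
  have hne : ((fun t => t ^ δ * ‖u₁ t - u₂ t‖) '' Ioi 0).Nonempty :=
    ⟨_, Set.mem_image_of_mem (fun t => t ^ δ * ‖u₁ t - u₂ t‖) (mem_Ioi.mpr one_pos)⟩
  have hΦle : Φ ≤ Γ + Φ / 2 := by
    refine csSup_le hne ?_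
    rintro y ⟨t, ht, rfl⟩
    exact hmain t (mem_Ioi.mp ht)
  linarith
end

section
/- Assume the abstract setting described in the context. Let μ > 0 satisfy 2·M·c·μ^{ρ−1}·B < 1. Suppose g_u, g_v : (0,∞) → V are continuous and u, v : (0,∞) → V are mild solutions with forcings g_u and g_v respectively on (0,∞), with sup_{t>0} t^{αε}‖u(t)‖_V ≤ μ and sup_{t>0} t^{αε}‖v(t)‖_V ≤ μ. Then lim_{t→∞} t^{αε}‖g_u(t) − g_v(t)‖_V = 0 if and only if lim_{t→∞} t^{αε}‖u(t) − v(t)‖_V = 0. -/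
open MeasureTheory Set Filter Topology intervalIntegral
open scoped ENNReal

lemma beta_scaled {p q t : ℝ} (ht : 0 < t)
    (h : IntervalIntegrable (fun s => (1 - s) ^ p * s ^ q) volume 0 1) :
    IntervalIntegrable (fun s => (t - s) ^ p * s ^ q) volume 0 t := by
  have h2 := (h.comp_mul_left (c := t⁻¹)).const_mul (t ^ p * t ^ q)
  rw [zero_div, one_div, inv_inv] at h2
  refine h2.congr_ae ?_
  have hmem : Set.uIoc (0:ℝ) t = Ioc 0 t := uIoc_of_le ht.le
  refine Filter.eventuallyEq_of_mem (self_mem_ae_restrict (by rw [hmem]; exact measurableSet_Ioc)) ?_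
  intro s hs
  rw [hmem] at hs
  have hs0 : 0 ≤ s := hs.1.le
  have hst : s ≤ t := hs.2
  have hsle : t⁻¹ * s ≤ 1 := by
    have h1 : t⁻¹ * s ≤ t⁻¹ * t := mul_le_mul_of_nonneg_left hst (inv_pos.mpr ht).le
    rwa [inv_mul_cancel₀ ht.ne'] at h1
  have e1 : t - s = t * (1 - t⁻¹ * s) := by field_simp
  have e2 : s = t * (t⁻¹ * s) := by field_simp
  calc t ^ p * t ^ q * ((1 - t⁻¹ * s) ^ p * (t⁻¹ * s) ^ q)
      = (t * (1 - t⁻¹ * s)) ^ p * (t * (t⁻¹ * s)) ^ q := by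
        rw [Real.mul_rpow ht.le (by linarith), Real.mul_rpow ht.le (by positivity)]
        ring
    _ = (t - s) ^ p * s ^ q := by rw [← e1, ← e2]

/-- pointwise scaling identity -/
lemma scale_pt {p q t σ : ℝ} (ht : 0 < t) (hσ0 : 0 ≤ σ) (hσ1 : σ ≤ 1) :
    (t - σ * t) ^ p * (σ * t) ^ q = (t ^ p * t ^ q) * ((1 - σ) ^ p * σ ^ q) := by
  have e1 : t - σ * t = t * (1 - σ) := by ring
  have e2 : σ * t = t * σ := by ring
  rw [e1, e2, Real.mul_rpow ht.le (by linarith), Real.mul_rpow ht.le hσ0]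
  ring

set_option maxHeartbeats 2000000 in
/-- **Theorem 1.3 (asymptotic stability).**
If `u, v` are globally defined mild solutions with forcings `g_u, g_v` and weighted norms
`≤ μ`, where `2 M c μ^{ρ-1} B < 1`, then `t^{αε}‖g_u t - g_v t‖ → 0` as `t → ∞` if and only
if `t^{αε}‖u t - v t‖ → 0` as `t → ∞`. -/
theorem asymptotic_stability
    {V W : Type*} [NormedAddCommGroup V] [NormedSpace ℝ V] [CompleteSpace V]
    [NormedAddCommGroup W] [NormedSpace ℝ W] [CompleteSpace W]
    (ρ α ε M c B : ℝ)
    (hρ : 1 < ρ) (hα : 1 < α) (hε : 0 < ε) (hαρε : α * ρ * ε < 1)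
    (hM : 0 < M) (hc : 0 < c)
    (R : ℝ → W →L[ℝ] V)
    (hRcont : ∀ w : W, ContinuousOn (fun t => R t w) (Ioi (0:ℝ)))
    (hRbound : ∀ t > (0:ℝ), ∀ w : W, ‖R t w‖ ≤ M * t ^ (α * (ρ - 1) * ε - 1) * ‖w‖)
    (f : V → W) (hf0 : f 0 = 0)
    (hf : ∀ x y : V, ‖f x - f y‖ ≤ c * (‖x‖ ^ (ρ - 1) + ‖y‖ ^ (ρ - 1)) * ‖x - y‖)
    (hBint : IntervalIntegrable
      (fun s => (1 - s) ^ (α * (ρ - 1) * ε - 1) * s ^ (-(α * ρ * ε))) volume 0 1)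
    (hB : B = ∫ s in (0:ℝ)..1, (1 - s) ^ (α * (ρ - 1) * ε - 1) * s ^ (-(α * ρ * ε)))
    (μ : ℝ) (hμ : 0 < μ) (hsmall : 2 * M * c * μ ^ (ρ - 1) * B < 1)
    (gu gv : ℝ → V) (hgu : ContinuousOn gu (Ioi 0)) (hgv : ContinuousOn gv (Ioi 0))
    (u v : ℝ → V)
    (hu : IsMildSolutionOn R f gu u (Ioi 0))
    (hv : IsMildSolutionOn R f gv v (Ioi 0))
    (hubdd : ∀ t > (0:ℝ), t ^ (α * ε) * ‖u t‖ ≤ μ)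
    (hvbdd : ∀ t > (0:ℝ), t ^ (α * ε) * ‖v t‖ ≤ μ) :
    Tendsto (fun t => t ^ (α * ε) * ‖gu t - gv t‖) atTop (𝓝 0) ↔
      Tendsto (fun t => t ^ (α * ε) * ‖u t - v t‖) atTop (𝓝 0) := by
  obtain ⟨hucont, humild⟩ := hu
  obtain ⟨hvcont, hvmild⟩ := hv
  set a : ℝ := α * (ρ - 1) * ε with ha_def
  set b : ℝ := α * ρ * ε with hb_def
  set e : ℝ := α * ε with he_def
  have he : 0 < e := mul_pos (by linarith) hε
  have ha : 0 < a := mul_pos (mul_pos (by linarith) (by linarith)) hε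
  have hb : 0 < b := mul_pos (mul_pos (by linarith) (by linarith)) hε
  have hab : a + e = b := by rw [ha_def, hb_def, he_def]; ring
  have hb1 : b < 1 := hαρε
  have ha1 : a - 1 < 0 := by linarith
  set C' : ℝ := 2 * M * c * μ ^ (ρ - 1) with hC'_def
  have hC' : 0 < C' := by
    have : (0:ℝ) < μ ^ (ρ - 1) := Real.rpow_pos_of_pos hμ _
    rw [hC'_def]; positivity
  set phi : ℝ → ℝ := fun t => t ^ e * ‖u t - v t‖ with hphi
  set psi : ℝ → ℝ := fun t => t ^ e * ‖gu t - gv t‖ with hpsi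
  -- basic facts about phi
  have hphinn : ∀ t : ℝ, 0 ≤ t → 0 ≤ phi t := fun t ht =>
    mul_nonneg (Real.rpow_nonneg ht _) (norm_nonneg _)
  have hpsinn : ∀ t : ℝ, 0 ≤ t → 0 ≤ psi t := fun t ht =>
    mul_nonneg (Real.rpow_nonneg ht _) (norm_nonneg _)
  have hphibdd : ∀ t : ℝ, 0 < t → phi t ≤ 2 * μ := by
    intro t ht
    have h1 := hubdd t ht
    have h2 := hvbdd t ht
    have h3 : ‖u t - v t‖ ≤ ‖u t‖ + ‖v t‖ := norm_sub_le _ _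
    have h4 : t ^ e * ‖u t - v t‖ ≤ t ^ e * (‖u t‖ + ‖v t‖) :=
      mul_le_mul_of_nonneg_left h3 (Real.rpow_nonneg ht.le _)
    have : t ^ e * (‖u t‖ + ‖v t‖) = t ^ e * ‖u t‖ + t ^ e * ‖v t‖ := by ring
    simp only [hphi]
    linarith [this ▸ h4]
  have hphicont : ContinuousOn phi (Ioi (0:ℝ)) := by
    rw [hphi]
    exact ((continuousOn_id.rpow_const fun s hs => Or.inl (ne_of_gt hs)).mul
      ((hucont.sub hvcont).norm))
  have hsetae_all : ∀ t : ℝ, 0 < t → ∀ᵐ s ∂volume.restrict (Set.uIoc (0:ℝ) t), s ∈ Ioo (0:ℝ) t := by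
    intro t ht
    rw [uIoc_of_le ht.le, ← Measure.restrict_congr_set (Ioo_ae_eq_Ioc (a := (0:ℝ)) (b := t))]
    exact self_mem_ae_restrict measurableSet_Ioo
  have hgint_all : ∀ t : ℝ, 0 < t → IntervalIntegrable
      (fun s => C' * ((t - s) ^ (a - 1) * (s ^ (-b) * phi s))) volume 0 t := by
    intro t ht
    have hbeta_t : IntervalIntegrable (fun s => (t - s) ^ (a - 1) * s ^ (-b)) volume 0 t :=
      beta_scaled ht hBint
    have hIoo_sub : Ioo (0:ℝ) t ⊆ Ioi (0:ℝ) := fun s hs => hs.1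
    have hgcont : ContinuousOn (fun s => C' * ((t - s) ^ (a - 1) * (s ^ (-b) * phi s))) (Ioo 0 t) := by
      refine continuousOn_const.mul (ContinuousOn.mul ?_ (ContinuousOn.mul ?_ ?_))
      · exact (continuousOn_const.sub continuousOn_id).rpow_const
          (fun s hs => Or.inl (by intro h; have h' : t = s := sub_eq_zero.mp h; linarith [hs.2]))
      · exact continuousOn_id.rpow_const (fun s hs => Or.inl hs.1.ne')
      · exact hphicont.mono hIoo_sub
    have hgaesm : AEStronglyMeasurable (fun s => C' * ((t - s) ^ (a - 1) * (s ^ (-b) * phi s)))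
        (volume.restrict (Set.uIoc (0:ℝ) t)) := by
      rw [uIoc_of_le ht.le, ← Measure.restrict_congr_set (Ioo_ae_eq_Ioc (a := (0:ℝ)) (b := t))]
      exact hgcont.aestronglyMeasurable measurableSet_Ioo
    apply IntervalIntegrable.mono_fun' (g := fun s => C' * (2 * μ) * ((t - s) ^ (a - 1) * s ^ (-b)))
        (hbeta_t.const_mul (C' * (2 * μ))) hgaesm
    refine (hsetae_all t ht).mono fun s hs => ?_
    have hs0 : 0 < s := hs.1
    have hP : 0 ≤ (t - s) ^ (a - 1) := Real.rpow_nonneg (by linarith [hs.2]) _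
    have hQ : 0 ≤ s ^ (-b) := Real.rpow_nonneg hs0.le _
    have hphis : 0 ≤ phi s := hphinn s hs0.le
    have hple : phi s ≤ 2 * μ := hphibdd s hs0
    have hnn : 0 ≤ C' * ((t - s) ^ (a - 1) * (s ^ (-b) * phi s)) := by positivity
    dsimp only
    rw [Real.norm_eq_abs, abs_of_nonneg hnn]
    calc C' * ((t - s) ^ (a - 1) * (s ^ (-b) * phi s))
        ≤ C' * ((t - s) ^ (a - 1) * (s ^ (-b) * (2 * μ))) := by
          apply mul_le_mul_of_nonneg_left _ hC'.le
          apply mul_le_mul_of_nonneg_left _ hP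
          exact mul_le_mul_of_nonneg_left hple hQ
      _ = C' * (2 * μ) * ((t - s) ^ (a - 1) * s ^ (-b)) := by ring
  -- the key integral inequality
  have key : ∀ t : ℝ, 0 < t →
      t ^ e * ‖u t - v t - (gu t - gv t)‖ ≤
        ∫ σ in (0:ℝ)..1, C' * ((1 - σ) ^ (a - 1) * σ ^ (-b)) * phi (σ * t) := by
    intro t ht
    obtain ⟨hiu, hequ⟩ := humild t ht
    obtain ⟨hiv, heqv⟩ := hvmild t ht
    have hdiff : u t - v t - (gu t - gv t)
        = ∫ s in (0:ℝ)..t, R (t - s) (f (u s) - f (v s)) := by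
      have h1 : u t - v t - (gu t - gv t)
          = (∫ s in (0:ℝ)..t, R (t - s) (f (u s))) - ∫ s in (0:ℝ)..t, R (t - s) (f (v s)) := by
        rw [hequ, heqv]; abel
      rw [h1, ← intervalIntegral.integral_sub hiu hiv]
      apply intervalIntegral.integral_congr
      intro s _
      simp [map_sub]
    have hbeta_t : IntervalIntegrable (fun s => (t - s) ^ (a - 1) * s ^ (-b)) volume 0 t :=
      beta_scaled ht hBint
    have hIoo_sub : Ioo (0:ℝ) t ⊆ Ioi (0:ℝ) := fun s hs => hs.1
    have hsetae := hsetae_all t ht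
    have hgint := hgint_all t ht
    have hptbound : ∀ᵐ s ∂volume.restrict (Set.uIoc (0:ℝ) t),
        ‖R (t - s) (f (u s) - f (v s))‖ ≤ C' * ((t - s) ^ (a - 1) * (s ^ (-b) * phi s)) := by
      refine hsetae.mono fun s hs => ?_
      have hs0 : 0 < s := hs.1
      have hst : s < t := hs.2
      have hts : 0 < t - s := by linarith
      have h1 := hRbound (t - s) hts (f (u s) - f (v s))
      have h2 := hf (u s) (v s)
      have hse : 0 < s ^ e := Real.rpow_pos_of_pos hs0 e
      have hus : ‖u s‖ ≤ μ * s ^ (-e) := by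
        rw [Real.rpow_neg hs0.le, ← div_eq_mul_inv, le_div_iff₀ hse]
        nlinarith [hubdd s hs0]
      have hvs : ‖v s‖ ≤ μ * s ^ (-e) := by
        rw [Real.rpow_neg hs0.le, ← div_eq_mul_inv, le_div_iff₀ hse]
        nlinarith [hvbdd s hs0]
      have husp : ‖u s‖ ^ (ρ - 1) ≤ μ ^ (ρ - 1) * s ^ (-e * (ρ - 1)) := by
        calc ‖u s‖ ^ (ρ - 1) ≤ (μ * s ^ (-e)) ^ (ρ - 1) :=
              Real.rpow_le_rpow (norm_nonneg _) hus (by linarith)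
          _ = μ ^ (ρ - 1) * s ^ (-e * (ρ - 1)) := by
              rw [Real.mul_rpow hμ.le (Real.rpow_nonneg hs0.le _), ← Real.rpow_mul hs0.le]
      have hvsp : ‖v s‖ ^ (ρ - 1) ≤ μ ^ (ρ - 1) * s ^ (-e * (ρ - 1)) := by
        calc ‖v s‖ ^ (ρ - 1) ≤ (μ * s ^ (-e)) ^ (ρ - 1) :=
              Real.rpow_le_rpow (norm_nonneg _) hvs (by linarith)
          _ = μ ^ (ρ - 1) * s ^ (-e * (ρ - 1)) := by
              rw [Real.mul_rpow hμ.le (Real.rpow_nonneg hs0.le _), ← Real.rpow_mul hs0.le]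
      have hsum : ‖u s‖ ^ (ρ - 1) + ‖v s‖ ^ (ρ - 1) ≤ 2 * μ ^ (ρ - 1) * s ^ (-e * (ρ - 1)) := by
        linarith
      have hN : (0:ℝ) ≤ ‖u s - v s‖ := norm_nonneg _
      have hP : 0 ≤ (t - s) ^ (a - 1) := Real.rpow_nonneg hts.le _
      have h3 : ‖f (u s) - f (v s)‖ ≤ c * (2 * μ ^ (ρ - 1) * s ^ (-e * (ρ - 1))) * ‖u s - v s‖ := by
        refine h2.trans ?_
        have := mul_le_mul_of_nonneg_right (mul_le_mul_of_nonneg_left hsum hc.le) hN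
        linarith
      have h4 : ‖R (t - s) (f (u s) - f (v s))‖
          ≤ M * (t - s) ^ (a - 1) * (c * (2 * μ ^ (ρ - 1) * s ^ (-e * (ρ - 1))) * ‖u s - v s‖) := by
        refine h1.trans ?_
        exact mul_le_mul_of_nonneg_left h3 (by positivity)
      refine h4.trans_eq ?_
      have hexp : s ^ (-e * (ρ - 1)) = s ^ (-b) * s ^ e := by
        rw [← Real.rpow_add hs0]; congr 1; rw [hb_def, he_def]; ring
      rw [hexp, hC'_def]
      simp only [hphi]
      ring
    have hintnn : (0:ℝ) ≤ ∫ s in (0:ℝ)..t, C' * ((t - s) ^ (a - 1) * (s ^ (-b) * phi s)) := by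
      apply intervalIntegral.integral_nonneg ht.le
      intro s hs
      exact mul_nonneg hC'.le (mul_nonneg (Real.rpow_nonneg (by linarith [hs.2]) _)
        (mul_nonneg (Real.rpow_nonneg hs.1 _) (hphinn s hs.1)))
    have hnorm : ‖∫ s in (0:ℝ)..t, R (t - s) (f (u s) - f (v s))‖ ≤
        ∫ s in (0:ℝ)..t, C' * ((t - s) ^ (a - 1) * (s ^ (-b) * phi s)) := by
      have h := intervalIntegral.norm_integral_le_abs_of_norm_le hptbound hgint
      rwa [abs_of_nonneg hintnn] at h
    have hcm := intervalIntegral.integral_comp_mul_right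
      (fun s => C' * ((t - s) ^ (a - 1) * (s ^ (-b) * phi s))) ht.ne' (a := 0) (b := 1)
    rw [zero_mul, one_mul, smul_eq_mul] at hcm
    have hsub : (∫ s in (0:ℝ)..t, C' * ((t - s) ^ (a - 1) * (s ^ (-b) * phi s)))
        = t * ∫ σ in (0:ℝ)..1, C' * ((t - σ * t) ^ (a - 1) * ((σ * t) ^ (-b) * phi (σ * t))) := by
      rw [hcm, ← mul_assoc, mul_inv_cancel₀ ht.ne', one_mul]
    have hcong : (∫ σ in (0:ℝ)..1, C' * ((t - σ * t) ^ (a - 1) * ((σ * t) ^ (-b) * phi (σ * t))))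
        = (t ^ (a - 1) * t ^ (-b)) *
            ∫ σ in (0:ℝ)..1, C' * ((1 - σ) ^ (a - 1) * σ ^ (-b)) * phi (σ * t) := by
      rw [← intervalIntegral.integral_const_mul]
      apply intervalIntegral.integral_congr
      intro σ hσ
      rw [uIcc_of_le zero_le_one] at hσ
      have hsc := scale_pt (p := a - 1) (q := -b) ht hσ.1 hσ.2
      linear_combination (C' * phi (σ * t)) * hsc
    have hT : t ^ e * (t * (t ^ (a - 1) * t ^ (-b))) = 1 := by
      calc t ^ e * (t * (t ^ (a - 1) * t ^ (-b)))
          = t ^ e * (t ^ (1:ℝ) * t ^ (a - 1 + -b)) := by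
            rw [← Real.rpow_add ht, Real.rpow_one]
        _ = t ^ (e + (1 + (a - 1 + -b))) := by rw [← Real.rpow_add ht, ← Real.rpow_add ht]
        _ = t ^ (0:ℝ) := by
            congr 1
            rw [hb_def, he_def, ha_def]; ring
        _ = 1 := Real.rpow_zero t
    calc t ^ e * ‖u t - v t - (gu t - gv t)‖
        = t ^ e * ‖∫ s in (0:ℝ)..t, R (t - s) (f (u s) - f (v s))‖ := by rw [hdiff]
      _ ≤ t ^ e * ∫ s in (0:ℝ)..t, C' * ((t - s) ^ (a - 1) * (s ^ (-b) * phi s)) :=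
          mul_le_mul_of_nonneg_left hnorm (Real.rpow_nonneg ht.le _)
      _ = (t ^ e * (t * (t ^ (a - 1) * t ^ (-b)))) *
            ∫ σ in (0:ℝ)..1, C' * ((1 - σ) ^ (a - 1) * σ ^ (-b)) * phi (σ * t) := by
          rw [hsub, hcong]; ring
      _ = ∫ σ in (0:ℝ)..1, C' * ((1 - σ) ^ (a - 1) * σ ^ (-b)) * phi (σ * t) := by
          rw [hT, one_mul]

    -- triangle inequalities
  have htri1 : ∀ t : ℝ, 0 < t → phi t ≤ psi t +
      ∫ σ in (0:ℝ)..1, C' * ((1 - σ) ^ (a - 1) * σ ^ (-b)) * phi (σ * t) := by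
    intro t ht
    have h := key t ht
    have htr : ‖u t - v t‖ ≤ ‖gu t - gv t‖ + ‖u t - v t - (gu t - gv t)‖ := by
      have hid : u t - v t = (gu t - gv t) + (u t - v t - (gu t - gv t)) := by abel
      calc ‖u t - v t‖ = ‖(gu t - gv t) + (u t - v t - (gu t - gv t))‖ := by rw [← hid]
        _ ≤ _ := norm_add_le _ _
    have h2 := mul_le_mul_of_nonneg_left htr (Real.rpow_nonneg ht.le e)
    have e1 : phi t = t ^ e * ‖u t - v t‖ := by rw [hphi]
    have e2 : psi t = t ^ e * ‖gu t - gv t‖ := by rw [hpsi]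
    rw [e1, e2]
    linarith [h, h2, mul_add (t ^ e) ‖gu t - gv t‖ ‖u t - v t - (gu t - gv t)‖]
  have htri2 : ∀ t : ℝ, 0 < t → psi t ≤ phi t +
      ∫ σ in (0:ℝ)..1, C' * ((1 - σ) ^ (a - 1) * σ ^ (-b)) * phi (σ * t) := by
    intro t ht
    have h := key t ht
    have htr : ‖gu t - gv t‖ ≤ ‖u t - v t‖ + ‖u t - v t - (gu t - gv t)‖ := by
      have hid : gu t - gv t = (u t - v t) - (u t - v t - (gu t - gv t)) := by abel
      calc ‖gu t - gv t‖ = ‖(u t - v t) - (u t - v t - (gu t - gv t))‖ := by rw [← hid]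
        _ ≤ _ := norm_sub_le _ _
    have h2 := mul_le_mul_of_nonneg_left htr (Real.rpow_nonneg ht.le e)
    have e1 : phi t = t ^ e * ‖u t - v t‖ := by rw [hphi]
    have e2 : psi t = t ^ e * ‖gu t - gv t‖ := by rw [hpsi]
    rw [e1, e2]
    linarith [h, h2, mul_add (t ^ e) ‖u t - v t‖ ‖u t - v t - (gu t - gv t)‖]
  -- integrability of the rescaled integrand
  have hKCint : IntervalIntegrable (fun σ => C' * ((1 - σ) ^ (a - 1) * σ ^ (-b))) volume 0 1 :=
    hBint.const_mul C'
  have hK0nn : ∀ σ : ℝ, σ ∈ Icc (0:ℝ) 1 → 0 ≤ (1 - σ) ^ (a - 1) * σ ^ (-b) := fun σ hσ =>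
    mul_nonneg (Real.rpow_nonneg (by linarith [hσ.2]) _) (Real.rpow_nonneg hσ.1 _)
  have hBnn : 0 ≤ B := hB ▸ intervalIntegral.integral_nonneg zero_le_one hK0nn
  have hPhiInt : ∀ t : ℝ, 0 < t → IntervalIntegrable
      (fun σ => C' * ((1 - σ) ^ (a - 1) * σ ^ (-b)) * phi (σ * t)) volume 0 1 := by
    intro t ht
    have h1 := (hgint_all t ht).comp_mul_right (c := t)
    rw [zero_div, div_self ht.ne'] at h1
    have htne : t ^ (a - 1) * t ^ (-b) ≠ 0 := by
      have h1 : (0:ℝ) < t ^ (a - 1) := Real.rpow_pos_of_pos ht _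
      have h2 : (0:ℝ) < t ^ (-b) := Real.rpow_pos_of_pos ht _
      positivity
    have h2 := h1.const_mul ((t ^ (a - 1) * t ^ (-b))⁻¹)
    refine h2.congr_ae ?_
    refine Filter.eventuallyEq_of_mem
      (self_mem_ae_restrict (by rw [uIoc_of_le zero_le_one]; exact measurableSet_Ioc)) ?_
    intro σ hσ
    rw [uIoc_of_le zero_le_one] at hσ
    have hsc := scale_pt (p := a - 1) (q := -b) ht hσ.1.le hσ.2
    dsimp only
    rw [inv_mul_eq_iff_eq_mul₀ htne]
    linear_combination (C' * phi (σ * t)) * hsc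
  -- limsup setup
  set L : ℝ := Filter.limsup phi Filter.atTop with hL_def
  have hbddabove : Filter.IsBoundedUnder (· ≤ ·) Filter.atTop phi :=
    isBoundedUnder_of_eventually_le (a := 2 * μ)
      (Filter.eventually_atTop.mpr ⟨1, fun t ht => hphibdd t (by linarith)⟩)
  have hbddbelow : Filter.IsBoundedUnder (· ≥ ·) Filter.atTop phi :=
    isBoundedUnder_of_eventually_ge (a := 0)
      (Filter.eventually_atTop.mpr ⟨1, fun t ht => hphinn t (by linarith)⟩)
  have hL0 : 0 ≤ L := le_limsup_of_frequently_le
    ((Filter.eventually_atTop.mpr ⟨1, fun t ht => hphinn t (by linarith)⟩).frequently) hbddabove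
  -- the eventual bound on the convolution integral
  have hIb : ∀ θ : ℝ, 0 < θ → ∀ᶠ t in Filter.atTop,
      (∫ σ in (0:ℝ)..1, C' * ((1 - σ) ^ (a - 1) * σ ^ (-b)) * phi (σ * t))
        ≤ C' * B * (L + θ) + θ := by
    intro θ hθ
    -- choose δ
    have hprim : ContinuousOn (fun x => ∫ s in (0:ℝ)..x, (1 - s) ^ (a - 1) * s ^ (-b))
        (uIcc (0:ℝ) 1) :=
      intervalIntegral.continuousOn_primitive_interval' hBint left_mem_uIcc
    have hcw2 : Filter.Tendsto (fun x => ∫ s in (0:ℝ)..x, (1 - s) ^ (a - 1) * s ^ (-b))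
        (𝓝[uIcc (0:ℝ) 1] 0) (𝓝 0) := by
      have h := hprim 0 left_mem_uIcc
      rwa [ContinuousWithinAt, intervalIntegral.integral_same] at h
    have hC2μ : (0:ℝ) < C' * (2 * μ) + 1 := by positivity
    have hθ' : (0:ℝ) < θ / (C' * (2 * μ) + 1) := by positivity
    have hev : ∀ᶠ x in 𝓝[uIcc (0:ℝ) 1] 0,
        (∫ s in (0:ℝ)..x, (1 - s) ^ (a - 1) * s ^ (-b)) < θ / (C' * (2 * μ) + 1) :=
      hcw2.eventually (gt_mem_nhds hθ')
    have hIocle : 𝓝[Ioc (0:ℝ) 1] 0 ≤ 𝓝[uIcc (0:ℝ) 1] 0 :=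
      nhdsWithin_mono _ (by rw [uIcc_of_le zero_le_one]; exact Ioc_subset_Icc_self)
    haveI : (𝓝[Ioc (0:ℝ) 1] (0:ℝ)).NeBot := left_nhdsWithin_Ioc_neBot zero_lt_one
    obtain ⟨δ, hδsm, hδmem⟩ := ((hev.filter_mono hIocle).and self_mem_nhdsWithin).exists
    have hδ0 : 0 < δ := hδmem.1
    have hδ1 : δ ≤ 1 := hδmem.2
    -- choose T
    have hLθ : Filter.limsup phi Filter.atTop < L + θ := by rw [← hL_def]; linarith
    obtain ⟨T, hT⟩ := Filter.eventually_atTop.mp (Filter.eventually_lt_of_limsup_lt hLθ hbddabove)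
    rw [Filter.eventually_atTop]
    refine ⟨max (T / δ) 1, fun t htt => ?_⟩
    have ht1 : (1:ℝ) ≤ t := le_trans (le_max_right _ _) htt
    have ht : (0:ℝ) < t := by linarith
    have htT : T ≤ δ * t := by
      have h := le_trans (le_max_left _ _) htt
      rw [div_le_iff₀ hδ0] at h
      exact h.trans_eq (mul_comm t δ)
    have hPhit := hPhiInt t ht
    have hsub1 : uIcc (0:ℝ) δ ⊆ uIcc (0:ℝ) 1 := by
      rw [uIcc_of_le hδ0.le, uIcc_of_le zero_le_one]; exact Icc_subset_Icc le_rfl hδ1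
    have hsub2 : uIcc δ (1:ℝ) ⊆ uIcc (0:ℝ) 1 := by
      rw [uIcc_of_le hδ1, uIcc_of_le zero_le_one]; exact Icc_subset_Icc hδ0.le le_rfl
    have hPhit1 := hPhit.mono_set hsub1
    have hPhit2 := hPhit.mono_set hsub2
    have hsplit : (∫ σ in (0:ℝ)..1, C' * ((1 - σ) ^ (a - 1) * σ ^ (-b)) * phi (σ * t))
        = (∫ σ in (0:ℝ)..δ, C' * ((1 - σ) ^ (a - 1) * σ ^ (-b)) * phi (σ * t))
          + ∫ σ in δ..1, C' * ((1 - σ) ^ (a - 1) * σ ^ (-b)) * phi (σ * t) :=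
      (intervalIntegral.integral_add_adjacent_intervals hPhit1 hPhit2).symm
    -- bound on [0, δ]
    have hbd1 : (∫ σ in (0:ℝ)..δ, C' * ((1 - σ) ^ (a - 1) * σ ^ (-b)) * phi (σ * t))
        ≤ ∫ σ in (0:ℝ)..δ, C' * (2 * μ) * ((1 - σ) ^ (a - 1) * σ ^ (-b)) := by
      apply intervalIntegral.integral_mono_on hδ0.le hPhit1
        ((hBint.const_mul (C' * (2 * μ))).mono_set hsub1)
      intro σ hσ
      rcases eq_or_lt_of_le hσ.1 with hσ0 | hσpos
      · rw [← hσ0]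
        simp [Real.zero_rpow (neg_ne_zero.mpr hb.ne')]
      · have hσt : 0 < σ * t := by positivity
        have h1 : phi (σ * t) ≤ 2 * μ := hphibdd _ hσt
        have hK : 0 ≤ (1 - σ) ^ (a - 1) * σ ^ (-b) :=
          mul_nonneg (Real.rpow_nonneg (by nlinarith [hσ.2]) _) (Real.rpow_nonneg hσpos.le _)
        calc C' * ((1 - σ) ^ (a - 1) * σ ^ (-b)) * phi (σ * t)
            ≤ C' * ((1 - σ) ^ (a - 1) * σ ^ (-b)) * (2 * μ) :=
              mul_le_mul_of_nonneg_left h1 (mul_nonneg hC'.le hK)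
          _ = C' * (2 * μ) * ((1 - σ) ^ (a - 1) * σ ^ (-b)) := by ring
    have hbd1' : (∫ σ in (0:ℝ)..δ, C' * (2 * μ) * ((1 - σ) ^ (a - 1) * σ ^ (-b))) ≤ θ := by
      rw [intervalIntegral.integral_const_mul]
      have h2 : (∫ σ in (0:ℝ)..δ, (1 - σ) ^ (a - 1) * σ ^ (-b)) < θ / (C' * (2 * μ) + 1) := hδsm
      have h3 : (0:ℝ) < C' * (2 * μ) := by positivity
      rw [← le_div_iff₀' h3]
      refine le_trans h2.le ?_
      apply div_le_div_of_nonneg_left hθ.le h3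
      linarith
    -- bound on [δ, 1]
    have hLθnn : 0 ≤ L + θ := by linarith
    have hbd2 : (∫ σ in δ..1, C' * ((1 - σ) ^ (a - 1) * σ ^ (-b)) * phi (σ * t))
        ≤ ∫ σ in δ..1, C' * ((1 - σ) ^ (a - 1) * σ ^ (-b)) * (L + θ) := by
      apply intervalIntegral.integral_mono_on hδ1 hPhit2 (hKCint.mono_set hsub2 |>.mul_const (L + θ))
      intro σ hσ
      have hσpos : 0 < σ := lt_of_lt_of_le hδ0 hσ.1
      have hσT : T ≤ σ * t := le_trans htT (by nlinarith [hσ.1])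
      have hK : 0 ≤ (1 - σ) ^ (a - 1) * σ ^ (-b) :=
        mul_nonneg (Real.rpow_nonneg (by linarith [hσ.2]) _) (Real.rpow_nonneg hσpos.le _)
      exact mul_le_mul_of_nonneg_left (hT _ hσT).le (mul_nonneg hC'.le hK)
    have hsB : (∫ σ in δ..1, (1 - σ) ^ (a - 1) * σ ^ (-b)) ≤ B := by
      have h0δ : 0 ≤ ∫ σ in (0:ℝ)..δ, (1 - σ) ^ (a - 1) * σ ^ (-b) :=
        intervalIntegral.integral_nonneg hδ0.le (fun σ hσ =>
          mul_nonneg (Real.rpow_nonneg (by linarith [hσ.2]) _) (Real.rpow_nonneg hσ.1 _))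
      have hadd : (∫ σ in (0:ℝ)..δ, (1 - σ) ^ (a - 1) * σ ^ (-b))
          + (∫ σ in δ..1, (1 - σ) ^ (a - 1) * σ ^ (-b)) = B := by
        rw [hB]
        exact intervalIntegral.integral_add_adjacent_intervals
          (hBint.mono_set hsub1) (hBint.mono_set hsub2)
      linarith
    have hbd2' : (∫ σ in δ..1, C' * ((1 - σ) ^ (a - 1) * σ ^ (-b)) * (L + θ)) ≤ C' * B * (L + θ) := by
      have h1 : (∫ σ in δ..1, C' * ((1 - σ) ^ (a - 1) * σ ^ (-b)) * (L + θ))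
          = (∫ σ in δ..1, (1 - σ) ^ (a - 1) * σ ^ (-b)) * (C' * (L + θ)) := by
        rw [← intervalIntegral.integral_mul_const]
        apply intervalIntegral.integral_congr
        intro σ _; dsimp only; ring
      rw [h1]
      calc (∫ σ in δ..1, (1 - σ) ^ (a - 1) * σ ^ (-b)) * (C' * (L + θ))
          ≤ B * (C' * (L + θ)) :=
            mul_le_mul_of_nonneg_right hsB (mul_nonneg hC'.le hLθnn)
        _ = C' * B * (L + θ) := by ring
    rw [hsplit]
    linarith
  have hev_t_pos : ∀ᶠ t : ℝ in Filter.atTop, (0:ℝ) < t := Filter.eventually_gt_atTop 0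
  have hpsinn' : ∀ᶠ t : ℝ in Filter.atTop, 0 ≤ psi t :=
    hev_t_pos.mono fun t ht => hpsinn t ht.le
  have hphinn' : ∀ᶠ t : ℝ in Filter.atTop, 0 ≤ phi t :=
    hev_t_pos.mono fun t ht => hphinn t ht.le
  constructor
  · -- forcing → solutions
    intro hpsit
    have hstep : ∀ θ : ℝ, 0 < θ → L ≤ C' * B * (L + θ) + 2 * θ := by
      intro θ hθ
      have h2 : ∀ᶠ t in Filter.atTop, psi t < θ := hpsit.eventually (gt_mem_nhds hθ)
      have h3 : ∀ᶠ t : ℝ in Filter.atTop, phi t ≤ C' * B * (L + θ) + 2 * θ := by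
        filter_upwards [hIb θ hθ, h2, hev_t_pos] with t hIt hpt htpos
        have := htri1 t htpos
        linarith
      rw [hL_def]
      exact Filter.limsup_le_of_le hbddbelow.isCoboundedUnder_le h3
    have hL_le : L ≤ C' * B * L := by
      by_contra hcon
      push_neg at hcon
      have hd : 0 < (L - C' * B * L) / (C' * B + 3) := by
        apply div_pos (by linarith) (by nlinarith [mul_nonneg hC'.le hBnn])
      have h := hstep _ hd
      have hcb : 0 ≤ C' * B := mul_nonneg hC'.le hBnn
      have h3 : (0:ℝ) < C' * B + 3 := by linarith
      have hkey : C' * B * ((L - C' * B * L) / (C' * B + 3))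
          + 2 * ((L - C' * B * L) / (C' * B + 3)) < L - C' * B * L := by
        rw [← mul_div_assoc, ← mul_div_assoc, ← add_div, div_lt_iff₀ h3]
        nlinarith
      linarith
    have hLz : L ≤ 0 := by
      by_contra hl
      push_neg at hl
      nlinarith [mul_lt_mul_of_pos_right hsmall hl]
    have hliminf : 0 ≤ Filter.liminf phi Filter.atTop :=
      le_liminf_of_le hbddabove.isCoboundedUnder_ge hphinn'
    have hlimsup : Filter.limsup phi Filter.atTop ≤ 0 := hL_def ▸ hLz
    exact tendsto_of_le_liminf_of_limsup_le hliminf hlimsup hbddabove hbddbelow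
  · -- solutions → forcing
    intro hphit
    have hLz : L = 0 := by rw [hL_def]; exact hphit.limsup_eq
    have hstep : ∀ θ : ℝ, 0 < θ → ∀ᶠ t : ℝ in Filter.atTop, psi t ≤ (C' * B + 2) * θ := by
      intro θ hθ
      filter_upwards [hIb θ hθ, hphit.eventually (gt_mem_nhds hθ), hev_t_pos] with t h1 h2 h3
      have h4 := htri2 t h3
      rw [hLz] at h1
      nlinarith
    have hpsibddabove : Filter.IsBoundedUnder (· ≤ ·) Filter.atTop psi :=
      isBoundedUnder_of_eventually_le (hstep 1 one_pos)
    have hpsibddbelow : Filter.IsBoundedUnder (· ≥ ·) Filter.atTop psi :=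
      isBoundedUnder_of_eventually_ge hpsinn'
    have hcb : 0 ≤ C' * B := mul_nonneg hC'.le hBnn
    have hsup : Filter.limsup psi Filter.atTop ≤ 0 := by
      by_contra hcon
      push_neg at hcon
      have hθ0 : 0 < Filter.limsup psi Filter.atTop / (2 * (C' * B + 2)) := by positivity
      have h := Filter.limsup_le_of_le hpsibddbelow.isCoboundedUnder_le (hstep _ hθ0)
      have hne : C' * B + 2 ≠ 0 := by positivity
      have heq : (C' * B + 2) * (Filter.limsup psi Filter.atTop / (2 * (C' * B + 2)))
          = Filter.limsup psi Filter.atTop / 2 := by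
        field_simp
      rw [heq] at h
      linarith
    have hinf : 0 ≤ Filter.liminf psi Filter.atTop :=
      le_liminf_of_le hpsibddabove.isCoboundedUnder_ge hpsinn'
    exact tendsto_of_le_liminf_of_limsup_le hinf hsup hpsibddabove hpsibddbelow
end

section
/- Let a > 0, b ∈ [0,1) and C ≥ 0 be real numbers, and let h : (0,∞) → ℝ be measurable with 0 ≤ h(t) ≤ C for all t > 0. Then limsup_{t→∞} ∫₀^1 (1−s)^{a−1} s^{−b} h(st) ds ≤ (∫₀^1 (1−s)^{a−1} s^{−b} ds) · limsup_{t→∞} h(t). -/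
open MeasureTheory intervalIntegral Filter

set_option maxHeartbeats 2000000 in
/-- **Reverse-Fatou estimate for the singular Beta kernel.**
For `a > 0`, `b ∈ [0,1)`, and a measurable `h : (0,∞) → ℝ` with `0 ≤ h ≤ C`,
`limsup_{t→∞} ∫₀^1 (1-s)^{a-1} s^{-b} h(st) ds ≤ (∫₀^1 (1-s)^{a-1} s^{-b} ds) · limsup_{t→∞} h(t)`. -/
theorem limsup_beta_kernel (a b C : ℝ) (ha : 0 < a) (hb0 : 0 ≤ b) (hb1 : b < 1)
    (hC : 0 ≤ C) (h : ℝ → ℝ) (hmeas : Measurable h)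
    (hnn : ∀ t > (0:ℝ), 0 ≤ h t) (hbdd : ∀ t > (0:ℝ), h t ≤ C) :
    limsup (fun t => ∫ s in (0:ℝ)..1, (1 - s) ^ (a - 1) * s ^ (-b) * h (s * t)) atTop ≤
      (∫ s in (0:ℝ)..1, (1 - s) ^ (a - 1) * s ^ (-b)) * limsup h atTop := by
  set K : ℝ → ℝ := fun s => (1 - s) ^ (a - 1) * s ^ (-b) with hK
  set L : ℝ := limsup h atTop with hL
  set I : ℝ := ∫ s in (0:ℝ)..1, K s with hI
  set F : ℝ → ℝ := fun t => ∫ s in (0:ℝ)..1, K s * h (s * t) with hF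
  have hne0 : ∀ᵐ s : ℝ, s ≠ 0 := by
    rw [ae_iff]
    have : {s : ℝ | ¬ s ≠ 0} = {0} := by ext s; simp
    rw [this]; exact Real.volume_singleton
  -- eventual bounds on h
  have hhb : ∀ᶠ t in atTop, h t ≤ C := by
    filter_upwards [eventually_gt_atTop 0] with t ht using hbdd t ht
  have hhn : ∀ᶠ t in atTop, (0:ℝ) ≤ h t := by
    filter_upwards [eventually_gt_atTop 0] with t ht using hnn t ht
  have hbound : IsBoundedUnder (· ≤ ·) atTop h := ⟨C, hhb⟩
  have hL0 : 0 ≤ L := le_limsup_of_frequently_le hhn.frequently hbound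
  -- K is nonneg on [0,1]
  have hKnn : ∀ s : ℝ, 0 ≤ s → s ≤ 1 → 0 ≤ K s := fun s hs0 hs1 =>
    mul_nonneg (Real.rpow_nonneg (by linarith) _) (Real.rpow_nonneg hs0 _)
  -- measurability and integrability of K
  have hKmeas : Measurable K :=
    ((measurable_const.sub measurable_id).pow_const (a - 1)).mul
      (measurable_id.pow_const (-b))
  have hKint : IntervalIntegrable K volume 0 1 := by
    have h1 : IntervalIntegrable K volume 0 (1/2) := by
      apply (intervalIntegrable_rpow' (by linarith : (-1:ℝ) < -b)).continuousOn_mul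
      apply ContinuousOn.rpow_const (by fun_prop)
      intro s hs
      rw [Set.uIcc_of_le (by norm_num)] at hs
      left; intro hcon
      have hs1 : s = 1 := by linarith
      rw [hs1] at hs; norm_num at hs
    have h2 : IntervalIntegrable K volume (1/2) 1 := by
      have hr : IntervalIntegrable (fun s : ℝ => (1 - s) ^ (a - 1)) volume (1/2) 1 := by
        have := (intervalIntegrable_rpow' (by linarith : (-1:ℝ) < a - 1)
          (a := 0) (b := 1/2)).comp_sub_left 1
        norm_num at this
        exact this.symm
      apply hr.mul_continuousOn
      apply ContinuousOn.rpow_const (by fun_prop)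
      intro s hs
      rw [Set.uIcc_of_le (by norm_num)] at hs
      left; intro hcon; rw [hcon] at hs; norm_num at hs
    exact h1.trans h2
  have hI0 : 0 ≤ I := by
    apply intervalIntegral.integral_nonneg (by norm_num)
    intro s hs; exact hKnn s hs.1 hs.2
  clear_value K L I F
  -- main estimate
  have key : ∀ ε' > (0:ℝ), limsup F atTop ≤ I * L + ε' := by
    intro ε' hε'
    set M : ℝ := max 1 ((2:ℝ) ^ (1 - a)) with hM
    have hM1 : (1:ℝ) ≤ M := le_max_left _ _
    have hM0 : 0 < M := by linarith
    set ε : ℝ := ε' / (2 * (I + 1)) with hε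
    have hεpos : 0 < ε := by positivity
    clear_value ε
    set ε₂ : ℝ := ε' * (1 - b) / (2 * (C * M + 1)) with hε₂
    have hε₂pos : 0 < ε₂ := div_pos (by nlinarith) (by positivity)
    have hle2M : (2:ℝ) ^ (1 - a) ≤ M := le_max_right _ _
    clear_value ε₂ M
    -- choose δ
    obtain ⟨δ, hδmem, hδε⟩ : ∃ δ : ℝ, δ ∈ Set.Ioo (0:ℝ) (1/2) ∧ δ ^ (1 - b) < ε₂ := by
      have hcont : ContinuousAt (fun x : ℝ => x ^ (1 - b)) 0 :=
        Real.continuousAt_rpow_const 0 (1 - b) (Or.inr (by linarith))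
      have htend : Tendsto (fun x : ℝ => x ^ (1 - b)) (nhds 0) (nhds 0) := by
        have := hcont.tendsto
        rwa [Real.zero_rpow (by linarith : (1:ℝ) - b ≠ 0)] at this
      have h1 : ∀ᶠ x in nhdsWithin (0:ℝ) (Set.Ioi 0), x ^ (1 - b) < ε₂ :=
        (htend.mono_left nhdsWithin_le_nhds).eventually (eventually_lt_nhds hε₂pos)
      have h2 : ∀ᶠ x in nhdsWithin (0:ℝ) (Set.Ioi 0), x ∈ Set.Ioo (0:ℝ) (1/2) :=
        Ioo_mem_nhdsGT_of_mem (by norm_num)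
      exact (h2.and h1).exists
    obtain ⟨hδ0, hδhalf⟩ := hδmem
    have hδ1 : δ ≤ 1 := by linarith
    -- T from limsup
    have hev : ∀ᶠ u in atTop, h u < L + ε := by
      apply eventually_lt_of_limsup_lt ?_ hbound
      rw [← hL]; linarith
    obtain ⟨T, hT⟩ := hev.exists_forall_of_atTop
    -- pointwise bound for K on (0, δ]
    have hKbd : ∀ s : ℝ, 0 < s → s ≤ δ → K s ≤ M * s ^ (-b) := by
      intro s hs0 hsδ
      rw [hK]
      have h1s : (1:ℝ)/2 ≤ 1 - s := by linarith
      have hKle : (1 - s) ^ (a - 1) ≤ M := by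
        rcases le_or_gt 1 a with h1 | h1
        · exact le_trans (Real.rpow_le_one (by linarith) (by linarith) (by linarith)) hM1
        · calc (1 - s) ^ (a - 1) ≤ ((1:ℝ)/2) ^ (a - 1) :=
                Real.rpow_le_rpow_of_nonpos (by norm_num) h1s (by linarith)
            _ = (2:ℝ) ^ (1 - a) := by
                rw [one_div, Real.inv_rpow (by norm_num), ← Real.rpow_neg (by norm_num)]
                ring_nf
            _ ≤ M := hle2M
      exact mul_le_mul_of_nonneg_right hKle (Real.rpow_nonneg hs0.le _)
    -- interval integrabilities
    have hsub1 : Set.uIcc 0 δ ⊆ Set.uIcc (0:ℝ) 1 := by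
      rw [Set.uIcc_of_le hδ0.le, Set.uIcc_of_le (by norm_num : (0:ℝ) ≤ 1)]
      exact Set.Icc_subset_Icc le_rfl hδ1
    have hsub2 : Set.uIcc δ 1 ⊆ Set.uIcc (0:ℝ) 1 := by
      rw [Set.uIcc_of_le hδ1, Set.uIcc_of_le (by norm_num : (0:ℝ) ≤ 1)]
      exact Set.Icc_subset_Icc hδ0.le le_rfl
    have hKδ0 : IntervalIntegrable K volume 0 δ := hKint.mono_set hsub1
    have hKδ1 : IntervalIntegrable K volume δ 1 := hKint.mono_set hsub2
    have hIsplit : (∫ s in (0:ℝ)..δ, K s) + (∫ s in δ..1, K s) = I := by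
      rw [hI]; exact integral_add_adjacent_intervals hKδ0 hKδ1
    have hIδnn : 0 ≤ ∫ s in (0:ℝ)..δ, K s :=
      intervalIntegral.integral_nonneg hδ0.le fun s hs => hKnn s hs.1 (hs.2.trans hδ1)
    -- eventual bound on F
    have hFev : ∀ᶠ t in atTop, F t ≤ I * L + ε' := by
      filter_upwards [eventually_ge_atTop (max (T / δ) 1)] with t ht
      have ht1 : (1:ℝ) ≤ t := le_trans (le_max_right _ _) ht
      have ht0 : 0 < t := by linarith
      have htT : T / δ ≤ t := le_trans (le_max_left _ _) ht
      have hTδt : T ≤ δ * t := by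
        rw [div_le_iff₀ hδ0] at htT; linarith [htT]
      -- integrability of the full integrand
      have hint : IntervalIntegrable (fun s => K s * h (s * t)) volume 0 1 := by
        rw [intervalIntegrable_iff_integrableOn_Ioc_of_le (by norm_num)]
        apply Integrable.mono' (g := fun s => C * K s) (hKint.1.const_mul C)
        · exact (hKmeas.mul (hmeas.comp (measurable_id.mul_const t))).aestronglyMeasurable
        · rw [ae_restrict_iff' measurableSet_Ioc]
          filter_upwards with s hs
          have hst : 0 < s * t := mul_pos hs.1 ht0
          have hK0 : 0 ≤ K s := hKnn s hs.1.le hs.2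
          rw [Real.norm_eq_abs, abs_of_nonneg (mul_nonneg hK0 (hnn _ hst))]
          calc K s * h (s * t) ≤ K s * C := mul_le_mul_of_nonneg_left (hbdd _ hst) hK0
            _ = C * K s := mul_comm _ _
      have h01 : IntervalIntegrable (fun s => K s * h (s * t)) volume 0 δ :=
        hint.mono_set hsub1
      have h02 : IntervalIntegrable (fun s => K s * h (s * t)) volume δ 1 :=
        hint.mono_set hsub2
      have hsplit : F t = (∫ s in (0:ℝ)..δ, K s * h (s * t)) + ∫ s in δ..1, K s * h (s * t) := by
        rw [hF]
        exact (integral_add_adjacent_intervals h01 h02).symm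
      -- piece 1
      have hrpow_int : IntervalIntegrable (fun s : ℝ => C * (M * s ^ (-b))) volume 0 δ :=
        ((intervalIntegrable_rpow' (by linarith : (-1:ℝ) < -b)).const_mul M).const_mul C
      have hp1 : (∫ s in (0:ℝ)..δ, K s * h (s * t)) ≤ ∫ s in (0:ℝ)..δ, C * (M * s ^ (-b)) := by
        apply intervalIntegral.integral_mono_ae_restrict hδ0.le h01 hrpow_int
        filter_upwards [ae_restrict_of_ae hne0, ae_restrict_mem measurableSet_Icc]
          with s hs0 hs
        have hspos : 0 < s := lt_of_le_of_ne hs.1 (Ne.symm hs0)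
        have hst : 0 < s * t := mul_pos hspos ht0
        have hK0 : 0 ≤ K s := hKnn s hs.1 (hs.2.trans hδ1)
        calc K s * h (s * t) ≤ K s * C := mul_le_mul_of_nonneg_left (hbdd _ hst) hK0
          _ = C * K s := mul_comm _ _
          _ ≤ C * (M * s ^ (-b)) :=
              mul_le_mul_of_nonneg_left (hKbd s hspos hs.2) hC
      have hval : (∫ s in (0:ℝ)..δ, C * (M * s ^ (-b))) = C * M * (δ ^ (1 - b) / (1 - b)) := by
        rw [intervalIntegral.integral_const_mul, intervalIntegral.integral_const_mul,
          integral_rpow (Or.inl (by linarith))]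
        rw [Real.zero_rpow (by linarith : -b + 1 ≠ 0)]
        have : -b + 1 = 1 - b := by ring
        rw [this]; ring
      have hp1' : (∫ s in (0:ℝ)..δ, K s * h (s * t)) ≤ ε' / 2 := by
        refine hp1.trans ?_
        rw [hval]
        have hδnn : 0 ≤ δ ^ (1 - b) := Real.rpow_nonneg hδ0.le _
        have h1b : (0:ℝ) < 1 - b := by linarith
        rw [hε₂, lt_div_iff₀ (by positivity)] at hδε
        rw [← mul_div_assoc, div_le_div_iff₀ h1b (by norm_num : (0:ℝ) < 2)]
        nlinarith [hδε, mul_nonneg hC hM0.le, hδnn]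
      -- piece 2
      have hp2 : (∫ s in δ..1, K s * h (s * t)) ≤ ∫ s in δ..1, K s * (L + ε) := by
        apply intervalIntegral.integral_mono_on hδ1 h02 (hKδ1.mul_const _)
        intro s hs
        have hspos : 0 < s := lt_of_lt_of_le hδ0 hs.1
        have hK0 : 0 ≤ K s := hKnn s hspos.le hs.2
        have hstT : T ≤ s * t := le_trans hTδt (by nlinarith [hs.1])
        exact mul_le_mul_of_nonneg_left (hT _ hstT).le hK0
      have hp2' : (∫ s in δ..1, K s * h (s * t)) ≤ I * L + ε' / 2 := by
        refine hp2.trans ?_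
        rw [intervalIntegral.integral_mul_const]
        have h1 : (∫ s in δ..1, K s) ≤ I := by linarith [hIsplit, hIδnn]
        have h2 : 0 ≤ ∫ s in δ..1, K s :=
          intervalIntegral.integral_nonneg hδ1 fun s hs => hKnn s (hδ0.le.trans hs.1) hs.2
        have h3 : (∫ s in δ..1, K s) * (L + ε) ≤ I * (L + ε) :=
          mul_le_mul_of_nonneg_right h1 (by linarith)
        have hIε : I * ε ≤ ε' / 2 := by
          rw [hε, ← mul_div_assoc, div_le_div_iff₀ (by linarith : (0:ℝ) < 2 * (I + 1))
            (by norm_num : (0:ℝ) < 2)]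
          nlinarith [hI0, hε'.le]
        nlinarith
      rw [hsplit]; linarith
    -- coboundedness of F
    have hFcobdd : IsCoboundedUnder (· ≤ ·) atTop F := by
      apply isCoboundedUnder_le_of_eventually_le atTop (x := 0)
      filter_upwards [eventually_gt_atTop 0] with t ht
      rw [hF]
      apply intervalIntegral.integral_nonneg_of_ae_restrict (by norm_num)
      filter_upwards [ae_restrict_of_ae hne0, ae_restrict_mem measurableSet_Icc]
        with s hs0 hs
      have hspos : 0 < s := lt_of_le_of_ne hs.1 (Ne.symm hs0)
      exact mul_nonneg (hKnn s hs.1 hs.2) (hnn _ (mul_pos hspos ht))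
    exact limsup_le_of_le hFcobdd hFev
  exact le_of_forall_sub_le fun ε' hε' => by linarith [key ε' hε']
end

section
/- Assume the abstract setting described in the context. In addition, let Z be a real Banach space, let j : V → Z be a bounded linear map, and let R₀ : (0,∞) → (W →L Z) be a family of bounded linear operators such that j(R(t)w) = R₀(t)w and ‖R₀(t)w‖_Z ≤ M t^{αρε−1} ‖w‖_W for all t > 0 and w ∈ W. Let τ ∈ (0,∞), let g : (0,τ] → V be continuous, let u be a mild solution with forcing g on (0,τ] with sup_{t∈(0,τ]} t^{αε}‖u(t)‖_V < ∞ and lim_{t→0⁺} t^{αε}‖u(t)‖_V = 0, and let g₀ ∈ Z with lim_{t→0⁺} ‖j(g(t)) − g₀‖_Z = 0. Then lim_{t→0⁺} ‖j(u(t)) − g₀‖_Z = 0. -/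
open MeasureTheory Set Filter Topology intervalIntegral
open scoped ENNReal

lemma beta_integrable {a : ℝ} (h0 : 0 < a) (h1 : a < 1) :
    IntervalIntegrable (fun s : ℝ => (1 - s) ^ (a - 1) * s ^ (-a)) volume 0 1 := by
  have half : (0:ℝ) ≤ 1/2 := by norm_num
  have segL : IntervalIntegrable (fun s : ℝ => (1 - s) ^ (a - 1) * s ^ (-a)) volume 0 (1/2) := by
    rw [intervalIntegrable_iff_integrableOn_Ioc_of_le half]
    have hint : IntegrableOn (fun s : ℝ => s ^ (-a)) (Icc (0:ℝ) (1/2)) volume := by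
      rw [integrableOn_Icc_iff_integrableOn_Ioc]
      exact (intervalIntegral.intervalIntegrable_rpow' (a := 0) (b := 1/2)
        (show (-1:ℝ) < -a by linarith)).1
    have hcont : ContinuousOn (fun s : ℝ => (1 - s) ^ (a - 1)) (Icc (0:ℝ) (1/2)) := by
      apply ContinuousOn.rpow_const (by fun_prop)
      intro x hx
      left
      intro h
      have : (1:ℝ) - x = 0 := h
      linarith [hx.2]
    exact (IntegrableOn.continuousOn_mul hcont hint isCompact_Icc).mono_set Ioc_subset_Icc_self
  have segR : IntervalIntegrable (fun s : ℝ => (1 - s) ^ (a - 1) * s ^ (-a)) volume (1/2) 1 := by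
    have hh : IntervalIntegrable (fun x : ℝ => x ^ (a - 1) * (1 - x) ^ (-a)) volume 0 (1/2) := by
      rw [intervalIntegrable_iff_integrableOn_Ioc_of_le half]
      have hint : IntegrableOn (fun s : ℝ => s ^ (a - 1)) (Icc (0:ℝ) (1/2)) volume := by
        rw [integrableOn_Icc_iff_integrableOn_Ioc]
        exact (intervalIntegral.intervalIntegrable_rpow' (a := 0) (b := 1/2)
          (show (-1:ℝ) < a - 1 by linarith)).1
      have hcont : ContinuousOn (fun s : ℝ => (1 - s) ^ (-a)) (Icc (0:ℝ) (1/2)) := by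
        apply ContinuousOn.rpow_const (by fun_prop)
        intro x hx
        left
        intro h
        have : (1:ℝ) - x = 0 := h
        linarith [hx.2]
      exact (IntegrableOn.mul_continuousOn hint hcont isCompact_Icc).mono_set Ioc_subset_Icc_self
    have := hh.comp_sub_left 1
    norm_num at this
    exact this.symm
  exact segL.trans segR

lemma scaled_eq {a t : ℝ} (ht : 0 < t) {s : ℝ} (hs0 : 0 ≤ s) (hst : s ≤ t) :
    (t - s) ^ (a - 1) * s ^ (-a)
      = t⁻¹ * ((1 - s * t⁻¹) ^ (a - 1) * (s * t⁻¹) ^ (-a)) := by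
  have h1 : 1 - s * t⁻¹ = (t - s) * t⁻¹ := by field_simp
  have h2 : (0:ℝ) ≤ t - s := by linarith
  have h3 : (0:ℝ) ≤ t⁻¹ := by positivity
  rw [h1, Real.mul_rpow h2 h3, Real.mul_rpow hs0 h3]
  have h4 : t⁻¹ ^ (a - 1) * t⁻¹ ^ (-a) = t := by
    rw [← Real.rpow_add (by positivity)]
    have : a - 1 + -a = -1 := by ring
    rw [this, Real.rpow_neg_one, inv_inv]
  calc (t - s) ^ (a - 1) * s ^ (-a)
      = t⁻¹ * t * ((t - s) ^ (a - 1) * s ^ (-a)) := by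
        rw [inv_mul_cancel₀ ht.ne', one_mul]
    _ = t⁻¹ * ((t - s) ^ (a - 1) * t⁻¹ ^ (a - 1) * (s ^ (-a) * t⁻¹ ^ (-a))) := by
        linear_combination (-(t⁻¹ * ((t - s) ^ (a - 1) * s ^ (-a)))) * h4

lemma scaled_integrable {a t : ℝ} (h0 : 0 < a) (h1 : a < 1) (ht : 0 < t) :
    IntervalIntegrable (fun s : ℝ => (t - s) ^ (a - 1) * s ^ (-a)) volume 0 t := by
  have hb := ((beta_integrable h0 h1).comp_mul_right (c := t⁻¹)).const_mul t⁻¹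
  norm_num [ht.ne'] at hb
  rw [intervalIntegrable_iff_integrableOn_Ioc_of_le ht.le] at hb ⊢
  exact hb.congr_fun (fun s hs => (scaled_eq ht hs.1.le hs.2).symm) measurableSet_Ioc

lemma scaled_integral {a t : ℝ} (ht : 0 < t) :
    ∫ s in (0:ℝ)..t, (t - s) ^ (a - 1) * s ^ (-a)
      = ∫ s in (0:ℝ)..1, (1 - s) ^ (a - 1) * s ^ (-a) := by
  rw [intervalIntegral.integral_congr (g := fun s => t⁻¹ * ((1 - s * t⁻¹) ^ (a - 1) * (s * t⁻¹) ^ (-a)))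
    (fun s hs => by
      rw [uIcc_of_le ht.le] at hs
      exact scaled_eq ht hs.1 hs.2)]
  rw [intervalIntegral.integral_const_mul,
    intervalIntegral.integral_comp_mul_right (fun x => (1 - x) ^ (a - 1) * x ^ (-a))
      (inv_ne_zero ht.ne')]
  simp [ht.ne']

/-- **Attainment of the initial datum (Part 1 of the proof of Theorem 1.1).**
With `Z` playing the role of `X¹_q = L^q(Ω)`, `j : V → Z` the embedding, and `R₀(t)` the
operator `R(t)` viewed in `Z` with smoothing bound `M t^{αρε-1}`: if `u` is a mild solution
with forcing `g` on `(0,τ]` with bounded weighted norm, `t^{αε}‖u t‖ → 0` as `t → 0⁺`, and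
`‖j (g t) - g₀‖ → 0` as `t → 0⁺`, then `‖j (u t) - g₀‖ → 0` as `t → 0⁺`. -/
theorem attains_initial_datum
    {V W : Type*} [NormedAddCommGroup V] [NormedSpace ℝ V] [CompleteSpace V]
    [NormedAddCommGroup W] [NormedSpace ℝ W] [CompleteSpace W]
    (ρ α ε M c B : ℝ)
    (hρ : 1 < ρ) (hα : 1 < α) (hε : 0 < ε) (hαρε : α * ρ * ε < 1)
    (hM : 0 < M) (hc : 0 < c)
    (R : ℝ → W →L[ℝ] V)
    (hRcont : ∀ w : W, ContinuousOn (fun t => R t w) (Ioi (0:ℝ)))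
    (hRbound : ∀ t > (0:ℝ), ∀ w : W, ‖R t w‖ ≤ M * t ^ (α * (ρ - 1) * ε - 1) * ‖w‖)
    (f : V → W) (hf0 : f 0 = 0)
    (hf : ∀ x y : V, ‖f x - f y‖ ≤ c * (‖x‖ ^ (ρ - 1) + ‖y‖ ^ (ρ - 1)) * ‖x - y‖)
    (hBint : IntervalIntegrable
      (fun s => (1 - s) ^ (α * (ρ - 1) * ε - 1) * s ^ (-(α * ρ * ε))) volume 0 1)
    (hB : B = ∫ s in (0:ℝ)..1, (1 - s) ^ (α * (ρ - 1) * ε - 1) * s ^ (-(α * ρ * ε)))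
    {Z : Type*} [NormedAddCommGroup Z] [NormedSpace ℝ Z] [CompleteSpace Z]
    (j : V →L[ℝ] Z) (R₀ : ℝ → W →L[ℝ] Z)
    (hjR : ∀ t > (0:ℝ), ∀ w : W, j (R t w) = R₀ t w)
    (hR₀bound : ∀ t > (0:ℝ), ∀ w : W, ‖R₀ t w‖ ≤ M * t ^ (α * ρ * ε - 1) * ‖w‖)
    (τ : ℝ) (hτ : 0 < τ)
    (g : ℝ → V) (hg : ContinuousOn g (Ioc 0 τ))
    (u : ℝ → V) (hu : IsMildSolutionOn R f g u (Ioc 0 τ))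
    (hubdd : ∃ C : ℝ, ∀ t ∈ Ioc (0:ℝ) τ, t ^ (α * ε) * ‖u t‖ ≤ C)
    (hu0 : Tendsto (fun t => t ^ (α * ε) * ‖u t‖) (𝓝[>] 0) (𝓝 0))
    (g₀ : Z) (hg0 : Tendsto (fun t => ‖j (g t) - g₀‖) (𝓝[>] 0) (𝓝 0)) :
    Tendsto (fun t => ‖j (u t) - g₀‖) (𝓝[>] 0) (𝓝 0) := by
  set a : ℝ := α * ρ * ε with ha
  have ha0 : 0 < a := by positivity
  have ha1 : a < 1 := hαρε
  set B' : ℝ := ∫ s in (0:ℝ)..1, (1 - s) ^ (a - 1) * s ^ (-a) with hB'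
  have hB'0 : 0 ≤ B' := by
    apply intervalIntegral.integral_nonneg (by norm_num)
    intro s hs
    exact mul_nonneg (Real.rpow_nonneg (by linarith [hs.2]) _)
      (Real.rpow_nonneg hs.1 _)
  rw [Metric.tendsto_nhdsWithin_nhds] at hu0 hg0 ⊢
  intro η hη
  set D : ℝ := M * c * (B' + 1) with hD
  have hD0 : 0 < D := by positivity
  set κ : ℝ := min 1 (η / (2 * D)) with hκ
  have hκ0 : 0 < κ := lt_min one_pos (by positivity)
  have hκ1 : κ ≤ 1 := min_le_left _ _
  have hκρ : κ ^ ρ ≤ κ := by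
    calc κ ^ ρ ≤ κ ^ (1:ℝ) := Real.rpow_le_rpow_of_exponent_ge hκ0 hκ1 (by linarith)
    _ = κ := Real.rpow_one κ
  have hhalf : M * c * κ ^ ρ * B' ≤ η / 2 := by
    have h1 : M * c * κ ^ ρ * B' ≤ D * κ := by
      rw [hD]
      have hκρ0 : 0 ≤ κ ^ ρ := Real.rpow_nonneg hκ0.le ρ
      nlinarith [mul_le_mul_of_nonneg_right hκρ hB'0, mul_pos hM hc,
        mul_pos (mul_pos hM hc) hκ0]
    have h2 : κ ≤ η / (2 * D) := min_le_right _ _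
    calc M * c * κ ^ ρ * B' ≤ D * κ := h1
      _ ≤ D * (η / (2 * D)) := by nlinarith
      _ = η / 2 := by field_simp
  obtain ⟨δ₁, hδ₁0, hδ₁⟩ := hu0 κ hκ0
  obtain ⟨δ₂, hδ₂0, hδ₂⟩ := hg0 (η / 2) (by positivity)
  refine ⟨min δ₁ (min δ₂ τ), by positivity, ?_⟩
  intro t ht htδ
  have ht0 : 0 < t := ht
  rw [Real.dist_eq, sub_zero, abs_of_nonneg ht0.le] at htδ
  have htδ₁ : t < δ₁ := lt_of_lt_of_le htδ (min_le_left _ _)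
  have htδ₂ : t < δ₂ := lt_of_lt_of_le htδ ((min_le_right _ _).trans (min_le_left _ _))
  have htτ : t < τ := lt_of_lt_of_le htδ ((min_le_right _ _).trans (min_le_right _ _))
  have htmem : t ∈ Ioc (0:ℝ) τ := ⟨ht0, htτ.le⟩
  obtain ⟨hInt, hEq⟩ := hu.2 t htmem
  rw [Real.dist_eq, sub_zero, abs_of_nonneg (norm_nonneg _)]
  have hdecomp : j (u t) - g₀
      = (j (g t) - g₀) + ∫ s in (0:ℝ)..t, j (R (t - s) (f (u s))) := by
    rw [hEq, map_add, ContinuousLinearMap.intervalIntegral_comp_comm j hInt]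
    abel
  -- pointwise bound on the integrand
  have hbd : ∀ᵐ s ∂volume.restrict (Set.uIoc 0 t),
      ‖j (R (t - s) (f (u s)))‖ ≤ M * c * κ ^ ρ * ((t - s) ^ (a - 1) * s ^ (-a)) := by
    have h1 : ∀ᵐ s ∂volume.restrict (Set.uIoc 0 t), s ∈ Set.uIoc 0 t :=
      ae_restrict_mem measurableSet_uIoc
    have h2 : ∀ᵐ s ∂volume.restrict (Set.uIoc 0 t), s ≠ t := by
      refine ae_restrict_of_ae ?_
      rw [ae_iff]
      convert Real.volume_singleton (a := t) using 2
      ext s; simp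
    filter_upwards [h1, h2] with s hs hst
    rw [uIoc_of_le ht0.le] at hs
    have hs0 : 0 < s := hs.1
    have hstlt : s < t := lt_of_le_of_ne hs.2 hst
    have hts : 0 < t - s := by linarith
    rw [hjR (t - s) hts]
    have step1 : ‖R₀ (t - s) (f (u s))‖ ≤ M * (t - s) ^ (a - 1) * ‖f (u s)‖ :=
      hR₀bound _ hts _
    have step2 : ‖f (u s)‖ ≤ c * ‖u s‖ ^ (ρ - 1) * ‖u s‖ := by
      have := hf (u s) 0
      simpa [hf0, Real.zero_rpow (show ρ - 1 ≠ 0 by linarith)] using this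
    have step3 : ‖u s‖ ^ (ρ - 1) * ‖u s‖ = ‖u s‖ ^ ρ := by
      rcases eq_or_lt_of_le (norm_nonneg (u s)) with h | h
      · rw [← h, Real.zero_rpow (show ρ - 1 ≠ 0 by linarith),
          Real.zero_rpow (show ρ ≠ 0 by linarith), zero_mul]
      · nth_rewrite 2 [← Real.rpow_one ‖u s‖]
        rw [← Real.rpow_add h]
        norm_num
    have h4 : s ^ (α * ε) * ‖u s‖ < κ := by
      have := hδ₁ (mem_Ioi.2 hs0)
        (by rw [Real.dist_eq, sub_zero, abs_of_nonneg hs0.le]; linarith)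
      rwa [Real.dist_eq, sub_zero, abs_of_nonneg
        (mul_nonneg (Real.rpow_nonneg hs0.le _) (norm_nonneg _))] at this
    have hspow : (0:ℝ) < s ^ (α * ε) := Real.rpow_pos_of_pos hs0 _
    have h5 : ‖u s‖ ≤ κ * s ^ (-(α * ε)) := by
      rw [Real.rpow_neg hs0.le, ← div_eq_mul_inv, le_div_iff₀ hspow, mul_comm]
      exact h4.le
    have hexp : -(α * ε) * ρ = -a := by rw [ha]; ring
    have h6 : ‖u s‖ ^ ρ ≤ κ ^ ρ * s ^ (-a) := by
      calc ‖u s‖ ^ ρ ≤ (κ * s ^ (-(α * ε))) ^ ρ :=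
            Real.rpow_le_rpow (norm_nonneg _) h5 (by linarith)
        _ = κ ^ ρ * (s ^ (-(α * ε))) ^ ρ :=
            Real.mul_rpow hκ0.le (Real.rpow_nonneg hs0.le _)
        _ = κ ^ ρ * s ^ (-(α * ε) * ρ) := by rw [← Real.rpow_mul hs0.le]
        _ = κ ^ ρ * s ^ (-a) := by rw [hexp]
    calc ‖R₀ (t - s) (f (u s))‖ ≤ M * (t - s) ^ (a - 1) * ‖f (u s)‖ := step1
      _ ≤ M * (t - s) ^ (a - 1) * (c * (κ ^ ρ * s ^ (-a))) := by
          apply mul_le_mul_of_nonneg_left _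
            (mul_nonneg hM.le (Real.rpow_nonneg hts.le _))
          calc ‖f (u s)‖ ≤ c * ‖u s‖ ^ (ρ - 1) * ‖u s‖ := step2
            _ = c * ‖u s‖ ^ ρ := by rw [mul_assoc, step3]
            _ ≤ c * (κ ^ ρ * s ^ (-a)) := mul_le_mul_of_nonneg_left h6 hc.le
      _ = M * c * κ ^ ρ * ((t - s) ^ (a - 1) * s ^ (-a)) := by ring
  have key : ‖∫ s in (0:ℝ)..t, j (R (t - s) (f (u s)))‖ ≤ M * c * κ ^ ρ * B' := by
    have hbint : IntervalIntegrable
        (fun s => M * c * κ ^ ρ * ((t - s) ^ (a - 1) * s ^ (-a))) volume 0 t :=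
      (scaled_integrable ha0 ha1 ht0).const_mul _
    have hkey := intervalIntegral.norm_integral_le_abs_of_norm_le hbd hbint
    rw [intervalIntegral.integral_const_mul, scaled_integral ht0, ← hB'] at hkey
    rwa [abs_of_nonneg (mul_nonneg (by positivity) hB'0)] at hkey
  have hgt : ‖j (g t) - g₀‖ < η / 2 := by
    have := hδ₂ (mem_Ioi.2 ht0)
      (by rw [Real.dist_eq, sub_zero, abs_of_nonneg ht0.le]; exact htδ₂)
    rwa [Real.dist_eq, sub_zero, abs_of_nonneg (norm_nonneg _)] at this
  calc ‖j (u t) - g₀‖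
      = ‖(j (g t) - g₀) + ∫ s in (0:ℝ)..t, j (R (t - s) (f (u s)))‖ := by rw [hdecomp]
    _ ≤ ‖j (g t) - g₀‖ + ‖∫ s in (0:ℝ)..t, j (R (t - s) (f (u s)))‖ := norm_add_le _ _
    _ < η := by
        have h7 := key.trans hhalf
        linarith
end

section
/- Assume the abstract setting described in the context. In addition, let V_θ be a real Banach space, let j_θ : V_θ → V be a bounded linear map, let δ > 0 with δ ≤ α(ρ−1)ε (in the paper δ = α(ρε−θ) for θ ∈ [0,ρε)), and let R_θ : (0,∞) → (W →L V_θ) be a family of bounded linear operators such that for every w ∈ W the map t ↦ R_θ(t)w is continuous on (0,∞), j_θ(R_θ(t)w) = R(t)w, and ‖R_θ(t)w‖_{V_θ} ≤ M t^{δ−1} ‖w‖_W for all t > 0 and w ∈ W. Let τ ∈ (0,∞), let g_θ : (0,τ] → V_θ be continuous, set g := j_θ ∘ g_θ, and let u be a mild solution with forcing g on (0,τ] with sup_{t∈(0,τ]} t^{αε}‖u(t)‖_V < ∞. Then there exists a continuous ũ : (0,τ] → V_θ with j_θ(ũ(t)) = u(t) for all t ∈ (0,τ]; moreover, writing θ :=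 ρε − δ/α, if lim_{t→0⁺} t^{αθ}‖g_θ(t)‖_{V_θ} = 0 and lim_{t→0⁺} t^{αε}‖u(t)‖_V = 0, then lim_{t→0⁺} t^{αθ}‖ũ(t)‖_{V_θ} = 0. -/
open MeasureTheory Set Filter Topology intervalIntegral
open scoped ENNReal

lemma IHR_beta_cont {a b : ℝ} :
    ContinuousOn (fun σ : ℝ => (1 - σ) ^ a * σ ^ b) (Ioo 0 1) := by
  intro σ hσ
  have h1 : (1 : ℝ) - σ ≠ 0 := by have := hσ.2; intro h; linarith [sub_eq_zero.mp h]
  refine ContinuousWithinAt.mul ?_ ?_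
  · exact ((Real.continuousAt_rpow_const _ a (Or.inl h1)).comp
      ((continuous_const.sub continuous_id).continuousAt)).continuousWithinAt
  · exact (Real.continuousAt_rpow_const _ b (Or.inl (ne_of_gt hσ.1))).continuousWithinAt

lemma IHR_beta {a b : ℝ} (ha : -1 < a) (hb : -1 < b) :
    IntegrableOn (fun σ : ℝ => (1 - σ) ^ a * σ ^ b) (Ioc 0 1) volume := by
  have m1 : AEStronglyMeasurable (fun σ : ℝ => (1 - σ) ^ a * σ ^ b)
      (volume.restrict (Ioc (0:ℝ) (1/2))) := by
    rw [← Measure.restrict_congr_set Ioo_ae_eq_Ioc]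
    exact (IHR_beta_cont.mono (Ioo_subset_Ioo le_rfl (by norm_num))).aestronglyMeasurable
      measurableSet_Ioo
  have m2 : AEStronglyMeasurable (fun σ : ℝ => (1 - σ) ^ a * σ ^ b)
      (volume.restrict (Ioc (1/2:ℝ) 1)) := by
    rw [← Measure.restrict_congr_set Ioo_ae_eq_Ioc]
    exact (IHR_beta_cont.mono (Ioo_subset_Ioo (by norm_num) le_rfl)).aestronglyMeasurable
      measurableSet_Ioo
  have i1 : IntegrableOn (fun σ : ℝ => σ ^ b) (Ioc (0:ℝ) (1/2)) volume := by
    rw [← intervalIntegrable_iff_integrableOn_Ioc_of_le (by norm_num : (0:ℝ) ≤ 1/2)]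
    exact intervalIntegrable_rpow' hb
  have i2 : IntegrableOn (fun σ : ℝ => (1 - σ) ^ a) (Ioc (1/2:ℝ) 1) volume := by
    rw [← intervalIntegrable_iff_integrableOn_Ioc_of_le (by norm_num : (1/2:ℝ) ≤ 1)]
    have := ((intervalIntegrable_rpow' ha (a := 0) (b := 1/2)).comp_sub_left 1).symm
    norm_num at this
    convert this using 2 <;> norm_num
  have part1 : IntegrableOn (fun σ : ℝ => (1 - σ) ^ a * σ ^ b) (Ioc (0:ℝ) (1/2)) volume := by
    refine Integrable.mono' (i1.const_mul (max 1 ((1/2:ℝ) ^ a))) m1 ?_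
    filter_upwards [ae_restrict_mem measurableSet_Ioc] with σ hσ
    have h2 : (0:ℝ) < 1 - σ := by have := hσ.2; linarith
    have hb1 : (1 - σ) ^ a ≤ max 1 ((1/2:ℝ) ^ a) := by
      rcases le_or_gt 0 a with h | h
      · exact le_max_of_le_left (Real.rpow_le_one h2.le (by have := hσ.1; linarith) h)
      · exact le_max_of_le_right
          (Real.rpow_le_rpow_of_nonpos (by norm_num) (by have := hσ.2; linarith) h.le)
    have hnn : (0:ℝ) ≤ (1 - σ) ^ a * σ ^ b :=
      mul_nonneg (Real.rpow_nonneg h2.le a) (Real.rpow_nonneg hσ.1.le b)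
    rw [Real.norm_eq_abs, abs_of_nonneg hnn]
    exact mul_le_mul_of_nonneg_right hb1 (Real.rpow_nonneg hσ.1.le b)
  have part2 : IntegrableOn (fun σ : ℝ => (1 - σ) ^ a * σ ^ b) (Ioc (1/2:ℝ) 1) volume := by
    refine Integrable.mono' (i2.const_mul (max 1 ((1/2:ℝ) ^ b))) m2 ?_
    filter_upwards [ae_restrict_mem measurableSet_Ioc] with σ hσ
    have hσ0 : (0:ℝ) < σ := by have := hσ.1; linarith
    have h2 : (0:ℝ) ≤ 1 - σ := by have := hσ.2; linarith
    have hb1 : σ ^ b ≤ max 1 ((1/2:ℝ) ^ b) := by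
      rcases le_or_gt 0 b with h | h
      · exact le_max_of_le_left (Real.rpow_le_one hσ0.le hσ.2 h)
      · exact le_max_of_le_right (Real.rpow_le_rpow_of_nonpos (by norm_num) hσ.1.le h.le)
    have hnn : (0:ℝ) ≤ (1 - σ) ^ a * σ ^ b :=
      mul_nonneg (Real.rpow_nonneg h2 a) (Real.rpow_nonneg hσ0.le b)
    rw [Real.norm_eq_abs, abs_of_nonneg hnn]
    calc (1 - σ) ^ a * σ ^ b ≤ (1 - σ) ^ a * max 1 ((1/2:ℝ) ^ b) :=
          mul_le_mul_of_nonneg_left hb1 (Real.rpow_nonneg h2 a)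
      _ = max 1 ((1/2:ℝ) ^ b) * (1 - σ) ^ a := by ring
  have hU : Ioc (0:ℝ) 1 = Ioc 0 (1/2) ∪ Ioc (1/2) 1 :=
    (Ioc_union_Ioc_eq_Ioc (by norm_num) (by norm_num)).symm
  rw [hU]
  exact part1.union part2

set_option maxHeartbeats 1000000 in
/-- **Instantaneous higher regularity (Theorem 1.1(A)).**
With `Vθ` playing the role of the stronger space `X^{1+θ}_q` (`θ = ρε - δ/α`, so
`αθ = αρε - δ`), `jθ : Vθ → V` the embedding and `Rθ(t)` the operator `R(t)` viewed with
values in `Vθ` and smoothing bound `M t^{δ-1}`: every mild solution `u` with forcing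
`g = jθ ∘ gθ` on `(0,τ]` with bounded weighted norm lifts to a continuous
`ũ : (0,τ] → Vθ` with `jθ (ũ t) = u t`; moreover, if `t^{αθ}‖gθ t‖ → 0` and
`t^{αε}‖u t‖ → 0` as `t → 0⁺`, then `t^{αθ}‖ũ t‖ → 0` as `t → 0⁺`. -/

theorem instantaneous_higher_regularity
    {V W : Type*} [NormedAddCommGroup V] [NormedSpace ℝ V] [CompleteSpace V]
    [NormedAddCommGroup W] [NormedSpace ℝ W] [CompleteSpace W]
    (ρ α ε M c B : ℝ)
    (hρ : 1 < ρ) (hα : 1 < α) (hε : 0 < ε) (hαρε : α * ρ * ε < 1)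
    (hM : 0 < M) (hc : 0 < c)
    (R : ℝ → W →L[ℝ] V)
    (hRcont : ∀ w : W, ContinuousOn (fun t => R t w) (Ioi (0:ℝ)))
    (hRbound : ∀ t > (0:ℝ), ∀ w : W, ‖R t w‖ ≤ M * t ^ (α * (ρ - 1) * ε - 1) * ‖w‖)
    (f : V → W) (hf0 : f 0 = 0)
    (hf : ∀ x y : V, ‖f x - f y‖ ≤ c * (‖x‖ ^ (ρ - 1) + ‖y‖ ^ (ρ - 1)) * ‖x - y‖)
    (hBint : IntervalIntegrable
      (fun s => (1 - s) ^ (α * (ρ - 1) * ε - 1) * s ^ (-(α * ρ * ε))) volume 0 1)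
    (hB : B = ∫ s in (0:ℝ)..1, (1 - s) ^ (α * (ρ - 1) * ε - 1) * s ^ (-(α * ρ * ε)))
    {Vθ : Type*} [NormedAddCommGroup Vθ] [NormedSpace ℝ Vθ] [CompleteSpace Vθ]
    (jθ : Vθ →L[ℝ] V) (δ : ℝ) (hδ : 0 < δ) (hδle : δ ≤ α * (ρ - 1) * ε)
    (Rθ : ℝ → W →L[ℝ] Vθ)
    (hRθcont : ∀ w : W, ContinuousOn (fun t => Rθ t w) (Ioi (0:ℝ)))
    (hjRθ : ∀ t > (0:ℝ), ∀ w : W, jθ (Rθ t w) = R t w)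
    (hRθbound : ∀ t > (0:ℝ), ∀ w : W, ‖Rθ t w‖ ≤ M * t ^ (δ - 1) * ‖w‖)
    (τ : ℝ) (hτ : 0 < τ)
    (gθ : ℝ → Vθ) (hgθ : ContinuousOn gθ (Ioc 0 τ))
    (u : ℝ → V) (hu : IsMildSolutionOn R f (fun t => jθ (gθ t)) u (Ioc 0 τ))
    (hubdd : ∃ C : ℝ, ∀ t ∈ Ioc (0:ℝ) τ, t ^ (α * ε) * ‖u t‖ ≤ C) :
    ∃ utilde : ℝ → Vθ,
      ContinuousOn utilde (Ioc 0 τ) ∧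
      (∀ t ∈ Ioc (0:ℝ) τ, jθ (utilde t) = u t) ∧
      (Tendsto (fun t => t ^ (α * ρ * ε - δ) * ‖gθ t‖) (𝓝[>] 0) (𝓝 0) →
        Tendsto (fun t => t ^ (α * ε) * ‖u t‖) (𝓝[>] 0) (𝓝 0) →
        Tendsto (fun t => t ^ (α * ρ * ε - δ) * ‖utilde t‖) (𝓝[>] 0) (𝓝 0)) := by
  obtain ⟨C₀, hC₀⟩ := hubdd
  have hα0 : (0:ℝ) < α := by linarith
  have hρ0 : (0:ℝ) < ρ := by linarith
  have hαρε0 : 0 < α * ρ * ε := by positivity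
  have hδ1 : (-1:ℝ) < δ - 1 := by linarith
  have hb1 : (-1:ℝ) < -(α * ρ * ε) := by linarith
  have hαε0 : 0 < α * ε := by positivity
  have hexp : δ - 1 - α * ρ * ε < 0 := by nlinarith
  have hC0 : 0 ≤ C₀ := le_trans (by positivity) (hC₀ τ ⟨hτ, le_rfl⟩)
  -- norm bound for f
  have hfnorm : ∀ w : V, ‖f w‖ ≤ c * ‖w‖ ^ ρ := by
    intro w
    rcases eq_or_ne w 0 with rfl | hw
    · simp [hf0, Real.zero_rpow (by positivity : ρ ≠ 0)]
    · have h := hf w 0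
      rw [hf0, sub_zero, sub_zero, norm_zero, Real.zero_rpow (by linarith : ρ - 1 ≠ 0),
        add_zero] at h
      calc ‖f w‖ ≤ c * ‖w‖ ^ (ρ - 1) * ‖w‖ := h
        _ = c * ‖w‖ ^ ρ := by
            have hq : ‖w‖ ^ (ρ - 1) * ‖w‖ = ‖w‖ ^ ρ := by
              rw [← Real.rpow_add_one (norm_ne_zero_iff.mpr hw) (ρ - 1), sub_add_cancel]
            rw [mul_assoc, hq]
  -- continuity of f
  have hfc : Continuous f := by
    rw [continuous_iff_continuousAt]; intro x
    have h1 : ContinuousAt (fun y : V => c * (‖y‖ ^ (ρ - 1) + ‖x‖ ^ (ρ - 1))) x := by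
      refine continuousAt_const.mul (ContinuousAt.add ?_ continuousAt_const)
      exact (Real.continuousAt_rpow_const _ _ (Or.inr (by linarith))).comp
        continuous_norm.continuousAt
    have h2 : Tendsto (fun y : V => ‖y - x‖) (𝓝 x) (𝓝 0) := by
      have h3 : Tendsto (fun y : V => y - x) (𝓝 x) (𝓝 (x - x)) :=
        (continuous_id.sub continuous_const).tendsto x
      rw [sub_self] at h3
      simpa using h3.norm
    have h0 : Tendsto (fun y => f y - f x) (𝓝 x) (𝓝 0) := by
      refine squeeze_zero_norm (fun y => hf y x) ?_
      simpa using Tendsto.mul h1 h2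
    have h4 := h0.add (tendsto_const_nhds (x := f x))
    simp only [sub_add_cancel, zero_add] at h4
    exact h4
  -- joint continuity of Rθ
  have hRθjoint : ∀ r₀ : ℝ, 0 < r₀ → ∀ w₀ : W,
      ContinuousAt (fun p : ℝ × W => Rθ p.1 p.2) (r₀, w₀) := by
    intro r₀ hr₀ w₀
    have key : (fun p : ℝ × W => Rθ p.1 p.2) =
        fun p : ℝ × W => Rθ p.1 (p.2 - w₀) + Rθ p.1 w₀ := by
      funext p; rw [map_sub]; abel
    rw [key]
    have t2 : Tendsto (fun p : ℝ × W => Rθ p.1 w₀) (𝓝 (r₀, w₀)) (𝓝 (Rθ r₀ w₀)) := by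
      have hca : ContinuousAt (fun t : ℝ => Rθ t w₀) r₀ :=
        (hRθcont w₀).continuousAt (Ioi_mem_nhds hr₀)
      exact Tendsto.comp hca (continuousAt_fst (p := (r₀, w₀)))
    have t1 : Tendsto (fun p : ℝ × W => Rθ p.1 (p.2 - w₀)) (𝓝 (r₀, w₀)) (𝓝 0) := by
      have hev : ∀ᶠ p : ℝ × W in 𝓝 (r₀, w₀), 0 < p.1 :=
        (isOpen_lt continuous_const continuous_fst).mem_nhds hr₀
      refine squeeze_zero_norm'
        (a := fun p : ℝ × W => M * p.1 ^ (δ - 1) * ‖p.2 - w₀‖) ?_ ?_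
      · filter_upwards [hev] with p hp using hRθbound p.1 hp _
      · have l1 : ContinuousAt (fun p : ℝ × W => M * p.1 ^ (δ - 1)) (r₀, w₀) :=
          continuousAt_const.mul (continuousAt_fst.rpow_const (Or.inl hr₀.ne'))
        have l2 : Tendsto (fun p : ℝ × W => ‖p.2 - w₀‖) (𝓝 (r₀, w₀)) (𝓝 0) := by
          have l3 : Tendsto (fun p : ℝ × W => p.2 - w₀) (𝓝 (r₀, w₀)) (𝓝 (w₀ - w₀)) :=
            (continuous_snd.sub continuous_const).tendsto _
          rw [sub_self] at l3
          simpa using l3.norm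
        simpa using Tendsto.mul l1 l2
    have hsum := t1.add t2
    show ContinuousAt _ _
    unfold ContinuousAt
    simpa using hsum
  set F : ℝ → ℝ → Vθ := fun t σ => Rθ (t * (1 - σ)) (f (u (t * σ))) with hF
  have hae : ∀ᵐ σ ∂(volume.restrict (Ioc (0:ℝ) 1)), σ ∈ Ioo (0:ℝ) 1 := by
    rw [← Measure.restrict_congr_set Ioo_ae_eq_Ioc]
    exact ae_restrict_mem measurableSet_Ioo
  -- the key pointwise bound
  have hFb : ∀ (κ : ℝ), 0 ≤ κ → ∀ t ∈ Ioc (0:ℝ) τ, ∀ σ ∈ Ioo (0:ℝ) 1,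
      (t * σ) ^ (α * ε) * ‖u (t * σ)‖ ≤ κ →
      ‖F t σ‖ ≤ M * c * κ ^ ρ * t ^ (δ - 1 - α * ρ * ε) *
        ((1 - σ) ^ (δ - 1) * σ ^ (-(α * ρ * ε))) := by
    intro κ hκ t ht σ hσ hψ
    have ht0 := ht.1
    have hσ0 := hσ.1
    have h1σ : (0:ℝ) < 1 - σ := by linarith [hσ.2]
    have hr : 0 < t * σ := mul_pos ht0 hσ0
    have hu_le : ‖u (t * σ)‖ ≤ κ * (t * σ) ^ (-(α * ε)) := by
      have hpos : (0:ℝ) ≤ (t * σ) ^ (-(α * ε)) := Real.rpow_nonneg hr.le _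
      have h := mul_le_mul_of_nonneg_left hψ hpos
      rw [← mul_assoc, ← Real.rpow_add hr] at h
      simp only [neg_add_cancel, Real.rpow_zero, one_mul] at h
      exact h.trans_eq (mul_comm _ _)
    have hnormp : ‖u (t * σ)‖ ^ ρ ≤ κ ^ ρ * (t * σ) ^ (-(α * ρ * ε)) := by
      have h2 : ‖u (t * σ)‖ ^ ρ ≤ (κ * (t * σ) ^ (-(α * ε))) ^ ρ :=
        Real.rpow_le_rpow (norm_nonneg _) hu_le hρ0.le
      rw [Real.mul_rpow hκ (Real.rpow_nonneg hr.le _), ← Real.rpow_mul hr.le] at h2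
      rw [show -(α * ε) * ρ = -(α * ρ * ε) by ring] at h2
      exact h2
    have hfu : ‖f (u (t * σ))‖ ≤ c * (κ ^ ρ * (t * σ) ^ (-(α * ρ * ε))) :=
      (hfnorm _).trans (mul_le_mul_of_nonneg_left hnormp hc.le)
    have hRb := hRθbound (t * (1 - σ)) (mul_pos ht0 h1σ) (f (u (t * σ)))
    calc ‖F t σ‖ ≤ M * (t * (1 - σ)) ^ (δ - 1) * ‖f (u (t * σ))‖ := hRb
      _ ≤ M * (t * (1 - σ)) ^ (δ - 1) * (c * (κ ^ ρ * (t * σ) ^ (-(α * ρ * ε)))) :=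
          mul_le_mul_of_nonneg_left hfu
            (mul_nonneg hM.le (Real.rpow_nonneg (mul_pos ht0 h1σ).le _))
      _ = M * c * κ ^ ρ * t ^ (δ - 1 - α * ρ * ε) *
          ((1 - σ) ^ (δ - 1) * σ ^ (-(α * ρ * ε))) := by
          rw [Real.mul_rpow ht0.le h1σ.le, Real.mul_rpow ht0.le hσ0.le,
            show δ - 1 - α * ρ * ε = δ - 1 + -(α * ρ * ε) by ring, Real.rpow_add ht0]
          ring
  -- a.e. strong measurability in σ
  have hmeas : ∀ t ∈ Ioc (0:ℝ) τ,
      AEStronglyMeasurable (F t) (volume.restrict (Ioc (0:ℝ) 1)) := by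
    intro t ht
    rw [← Measure.restrict_congr_set Ioo_ae_eq_Ioc]
    refine ContinuousOn.aestronglyMeasurable ?_ measurableSet_Ioo
    intro σ hσ
    have h1σ : (0:ℝ) < 1 - σ := by linarith [hσ.2]
    have humap : MapsTo (fun σ : ℝ => t * σ) (Ioo (0:ℝ) 1) (Ioc 0 τ) := fun x hx =>
      ⟨mul_pos ht.1 hx.1, le_trans (by nlinarith [ht.1, hx.2.le] : t * x ≤ t) ht.2⟩
    have hmemτ : t * σ ∈ Ioc (0:ℝ) τ := humap hσ
    have inner : ContinuousWithinAt
        (fun σ : ℝ => ((t * (1 - σ), f (u (t * σ))) : ℝ × W)) (Ioo 0 1) σ := by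
      refine ContinuousWithinAt.prodMk ?_ ?_
      · exact (continuous_const.mul (continuous_const.sub continuous_id)).continuousWithinAt
      · have hmul : ContinuousWithinAt (fun σ : ℝ => t * σ) (Ioo 0 1) σ :=
          (continuous_const.mul continuous_id).continuousWithinAt
        exact hfc.continuousAt.comp_continuousWithinAt
          ((hu.1 (t * σ) hmemτ).comp hmul humap)
    simp only [hF]
    exact ContinuousAt.comp_continuousWithinAt_of_eq
      (hRθjoint (t * (1 - σ)) (mul_pos ht.1 h1σ) (f (u (t * σ)))) inner rfl
  have hbeta : IntegrableOn (fun σ : ℝ => (1 - σ) ^ (δ - 1) * σ ^ (-(α * ρ * ε)))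
      (Ioc (0:ℝ) 1) volume := IHR_beta hδ1 hb1
  have hInt : ∀ t ∈ Ioc (0:ℝ) τ, IntegrableOn (F t) (Ioc (0:ℝ) 1) volume := by
    intro t ht
    refine Integrable.mono' (hbeta.const_mul (M * c * C₀ ^ ρ * t ^ (δ - 1 - α * ρ * ε)))
      (hmeas t ht) ?_
    filter_upwards [hae] with σ hσ
    have hmem : t * σ ∈ Ioc (0:ℝ) τ :=
      ⟨mul_pos ht.1 hσ.1, le_trans (by nlinarith [ht.1, hσ.2] : t * σ ≤ t) ht.2⟩
    have := hFb C₀ hC0 t ht σ hσ (hC₀ _ hmem)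
    calc ‖F t σ‖ ≤ M * c * C₀ ^ ρ * t ^ (δ - 1 - α * ρ * ε) *
        ((1 - σ) ^ (δ - 1) * σ ^ (-(α * ρ * ε))) := this
      _ = M * c * C₀ ^ ρ * t ^ (δ - 1 - α * ρ * ε) *
        ((1 - σ) ^ (δ - 1) * σ ^ (-(α * ρ * ε))) := rfl
  set Φ : ℝ → Vθ := fun t => ∫ σ in Ioc (0:ℝ) 1, F t σ with hΦdef
  set utilde : ℝ → Vθ := fun t => gθ t + t • Φ t with hut
  have hΦcont : ContinuousOn Φ (Ioc 0 τ) := by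
    intro t₀ ht₀
    have ht₀0 := ht₀.1
    simp only [hΦdef]
    refine continuousWithinAt_of_dominated
      (bound := fun σ => M * c * C₀ ^ ρ * (t₀ / 2) ^ (δ - 1 - α * ρ * ε) *
        ((1 - σ) ^ (δ - 1) * σ ^ (-(α * ρ * ε)))) ?_ ?_ ?_ ?_
    · filter_upwards [self_mem_nhdsWithin] with t ht using hmeas t ht
    · have h1 : ∀ᶠ t : ℝ in 𝓝[Ioc 0 τ] t₀, t₀ / 2 < t :=
        eventually_nhdsWithin_of_eventually_nhds (eventually_gt_nhds (by linarith))
      filter_upwards [h1, self_mem_nhdsWithin] with t hthalf htmem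
      filter_upwards [hae] with σ hσ
      have hmem : t * σ ∈ Ioc (0:ℝ) τ :=
        ⟨mul_pos htmem.1 hσ.1, le_trans (by nlinarith [htmem.1, hσ.2.le] : t * σ ≤ t) htmem.2⟩
      have hb0 : (0:ℝ) ≤ (1 - σ) ^ (δ - 1) * σ ^ (-(α * ρ * ε)) :=
        mul_nonneg (Real.rpow_nonneg (by linarith [hσ.2]) _) (Real.rpow_nonneg hσ.1.le _)
      have hK : (0:ℝ) ≤ M * c * C₀ ^ ρ := by positivity
      have hle : t ^ (δ - 1 - α * ρ * ε) ≤ (t₀ / 2) ^ (δ - 1 - α * ρ * ε) :=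
        Real.rpow_le_rpow_of_nonpos (by linarith) hthalf.le hexp.le
      calc ‖F t σ‖ ≤ M * c * C₀ ^ ρ * t ^ (δ - 1 - α * ρ * ε) *
            ((1 - σ) ^ (δ - 1) * σ ^ (-(α * ρ * ε))) :=
          hFb C₀ hC0 t htmem σ hσ (hC₀ _ hmem)
        _ ≤ M * c * C₀ ^ ρ * (t₀ / 2) ^ (δ - 1 - α * ρ * ε) *
            ((1 - σ) ^ (δ - 1) * σ ^ (-(α * ρ * ε))) :=
          mul_le_mul_of_nonneg_right (mul_le_mul_of_nonneg_left hle hK) hb0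
    · exact hbeta.const_mul _
    · filter_upwards [hae] with σ hσ
      have h1σ : (0:ℝ) < 1 - σ := by linarith [hσ.2]
      have hmapsTo : MapsTo (fun t : ℝ => t * σ) (Ioc 0 τ) (Ioc 0 τ) := fun x hx =>
        ⟨mul_pos hx.1 hσ.1, le_trans (by nlinarith [hx.1, hσ.2.le] : x * σ ≤ x) hx.2⟩
      have inner : ContinuousWithinAt
          (fun t : ℝ => ((t * (1 - σ), f (u (t * σ))) : ℝ × W)) (Ioc 0 τ) t₀ := by
        refine ContinuousWithinAt.prodMk ?_ ?_
        · exact (continuous_id.mul continuous_const).continuousWithinAt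
        · have hmul : ContinuousWithinAt (fun t : ℝ => t * σ) (Ioc 0 τ) t₀ :=
            (continuous_id.mul continuous_const).continuousWithinAt
          exact hfc.continuousAt.comp_continuousWithinAt
            (ContinuousWithinAt.comp (f := fun t : ℝ => t * σ)
              (hu.1 (t₀ * σ) (hmapsTo ht₀)) hmul hmapsTo)
      exact ContinuousAt.comp_continuousWithinAt_of_eq
        (hRθjoint (t₀ * (1 - σ)) (mul_pos ht₀0 h1σ) (f (u (t₀ * σ)))) inner rfl
  have hcont : ContinuousOn utilde (Ioc 0 τ) := by
    rw [hut]
    exact hgθ.add (continuous_id.continuousOn.smul hΦcont)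
  have hlift : ∀ t ∈ Ioc (0:ℝ) τ, jθ (utilde t) = u t := by
    intro t ht
    have hint := hInt t ht
    have h1 : jθ (Φ t) = ∫ σ in Ioc (0:ℝ) 1, jθ (F t σ) :=
      (ContinuousLinearMap.integral_comp_comm jθ hint).symm
    have h2 : (∫ σ in Ioc (0:ℝ) 1, jθ (F t σ)) =
        ∫ σ in Ioc (0:ℝ) 1, R (t - t * σ) (f (u (t * σ))) := by
      refine integral_congr_ae ?_
      filter_upwards [hae] with σ hσ
      have h1σ : (0:ℝ) < 1 - σ := by linarith [hσ.2]
      rw [hF]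
      rw [hjRθ _ (mul_pos ht.1 h1σ)]
      congr 2
      ring
    have h3 : (∫ σ in Ioc (0:ℝ) 1, R (t - t * σ) (f (u (t * σ)))) =
        ∫ σ in (0:ℝ)..1, (fun s => R (t - s) (f (u s))) (t * σ) := by
      rw [intervalIntegral.integral_of_le zero_le_one]
    have h4 : t • (∫ σ in (0:ℝ)..1, (fun s => R (t - s) (f (u s))) (t * σ)) =
        ∫ s in (0:ℝ)..t, R (t - s) (f (u s)) := by
      have h5 := intervalIntegral.smul_integral_comp_mul_left
        (a := 0) (b := 1) (fun s => R (t - s) (f (u s))) t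
      simpa using h5
    have hueq := (hu.2 t ht).2
    calc jθ (utilde t) = jθ (gθ t) + t • jθ (Φ t) := by
          rw [hut]; simp [map_add, _root_.map_smul]
      _ = jθ (gθ t) + ∫ s in (0:ℝ)..t, R (t - s) (f (u s)) := by rw [h1, h2, h3, h4]
      _ = u t := hueq.symm
  refine ⟨utilde, hcont, hlift, ?_⟩
  intro hg0 hU
  set B' := ∫ σ in Ioc (0:ℝ) 1, ((1 - σ) ^ (δ - 1) * σ ^ (-(α * ρ * ε))) with hB'
  have hB'0 : 0 ≤ B' :=
    setIntegral_nonneg measurableSet_Ioc (fun σ hσ =>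
      mul_nonneg (Real.rpow_nonneg (by linarith [hσ.2] : (0:ℝ) ≤ 1 - σ) _)
        (Real.rpow_nonneg hσ.1.le _))
  set D := M * c * B' with hD
  have hD0 : 0 ≤ D := mul_nonneg (by positivity) hB'0
  set e := α * ρ * ε - δ with he
  have hΨ : Tendsto (fun t => t ^ (e + 1) * ‖Φ t‖) (𝓝[>] (0:ℝ)) (𝓝 0) := by
    rw [Metric.tendsto_nhds]
    intro ε' hε'
    set κ := min 1 (ε' / (2 * (D + 1))) with hκdef
    have hκpos : 0 < κ := lt_min one_pos (by positivity)
    have hκ1 : κ ≤ 1 := min_le_left _ _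
    have hDκ : D * κ ^ ρ < ε' := by
      have h1 : κ ^ ρ ≤ κ := by
        have h1' := Real.rpow_le_rpow_of_exponent_ge hκpos hκ1 hρ.le
        simpa using h1'
      have h2 : κ ≤ ε' / (2 * (D + 1)) := min_le_right _ _
      have h3 : D * κ ^ ρ ≤ D * (ε' / (2 * (D + 1))) :=
        mul_le_mul_of_nonneg_left (h1.trans h2) hD0
      have h2D : (0:ℝ) < 2 * (D + 1) := by linarith
      have h4 : D * (ε' / (2 * (D + 1))) < ε' := by
        rw [mul_div_assoc'] at *
        rw [div_lt_iff₀ h2D]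
        nlinarith
      linarith
    obtain ⟨η, hη, hsub⟩ :=
      mem_nhdsGT_iff_exists_Ioo_subset.mp (hU (Iio_mem_nhds hκpos))
    filter_upwards [Ioo_mem_nhdsGT_of_mem
      (⟨le_rfl, lt_min hη hτ⟩ : (0:ℝ) ∈ Ico 0 (min η τ))] with t htm
    have ht0 : 0 < t := htm.1
    have htτ : t ∈ Ioc (0:ℝ) τ := ⟨ht0, (htm.2.trans_le (min_le_right _ _)).le⟩
    have htη : t < η := htm.2.trans_le (min_le_left _ _)
    have hΦle : ‖Φ t‖ ≤ M * c * κ ^ ρ * t ^ (δ - 1 - α * ρ * ε) * B' := by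
      simp only [hΦdef]
      have hbd : ∀ᵐ σ ∂(volume.restrict (Ioc (0:ℝ) 1)),
          ‖F t σ‖ ≤ M * c * κ ^ ρ * t ^ (δ - 1 - α * ρ * ε) *
            ((1 - σ) ^ (δ - 1) * σ ^ (-(α * ρ * ε))) := by
        filter_upwards [hae] with σ hσ
        refine hFb κ hκpos.le t htτ σ hσ ?_
        have hmem : t * σ ∈ Ioo (0:ℝ) η := ⟨mul_pos ht0 hσ.1, by nlinarith [hσ.2, ht0]⟩
        exact le_of_lt (hsub hmem)
      calc ‖Φ t‖ ≤ ∫ σ in Ioc (0:ℝ) 1, (M * c * κ ^ ρ * t ^ (δ - 1 - α * ρ * ε)) *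
            ((1 - σ) ^ (δ - 1) * σ ^ (-(α * ρ * ε))) :=
          norm_integral_le_of_norm_le (hbeta.const_mul _) hbd
        _ = M * c * κ ^ ρ * t ^ (δ - 1 - α * ρ * ε) * B' := by
          rw [MeasureTheory.integral_const_mul]
    have hval : t ^ (e + 1) * ‖Φ t‖ ≤ D * κ ^ ρ := by
      have h0 : (0:ℝ) ≤ t ^ (e + 1) := Real.rpow_nonneg ht0.le _
      have h6 := mul_le_mul_of_nonneg_left hΦle h0
      have heq : t ^ (e + 1) * (M * c * κ ^ ρ * t ^ (δ - 1 - α * ρ * ε) * B') = D * κ ^ ρ := by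
        rw [show t ^ (e + 1) * (M * c * κ ^ ρ * t ^ (δ - 1 - α * ρ * ε) * B') =
          M * c * B' * κ ^ ρ * (t ^ (e + 1) * t ^ (δ - 1 - α * ρ * ε)) by ring,
          ← Real.rpow_add ht0, show e + 1 + (δ - 1 - α * ρ * ε) = 0 by rw [he]; ring,
          Real.rpow_zero, mul_one, hD]
      exact h6.trans_eq heq
    have hnn : (0:ℝ) ≤ t ^ (e + 1) * ‖Φ t‖ :=
      mul_nonneg (Real.rpow_nonneg ht0.le _) (norm_nonneg _)
    rw [Real.dist_eq, sub_zero, abs_of_nonneg hnn]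
    linarith
  have hub : ∀ᶠ t in 𝓝[>] (0:ℝ), t ^ e * ‖utilde t‖ ≤ t ^ e * ‖gθ t‖ + t ^ (e + 1) * ‖Φ t‖ := by
    filter_upwards [Ioo_mem_nhdsGT_of_mem (⟨le_rfl, hτ⟩ : (0:ℝ) ∈ Ico 0 τ)] with t htm
    have ht0 : 0 < t := htm.1
    have h1 : ‖utilde t‖ ≤ ‖gθ t‖ + t * ‖Φ t‖ := by
      simp only [hut]
      calc ‖gθ t + t • Φ t‖ ≤ ‖gθ t‖ + ‖t • Φ t‖ := norm_add_le _ _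
        _ = ‖gθ t‖ + t * ‖Φ t‖ := by rw [norm_smul, Real.norm_eq_abs, abs_of_pos ht0]
    have h2 : t ^ e * ‖utilde t‖ ≤ t ^ e * (‖gθ t‖ + t * ‖Φ t‖) :=
      mul_le_mul_of_nonneg_left h1 (Real.rpow_nonneg ht0.le _)
    have h3 : t ^ e * (t * ‖Φ t‖) = t ^ (e + 1) * ‖Φ t‖ := by
      rw [Real.rpow_add_one ht0.ne' e]; ring
    rw [mul_add, h3] at h2
    exact h2
  have hnn : ∀ᶠ t in 𝓝[>] (0:ℝ), 0 ≤ t ^ e * ‖utilde t‖ := by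
    filter_upwards [self_mem_nhdsWithin] with t ht using
      mul_nonneg (Real.rpow_nonneg (le_of_lt ht) _) (norm_nonneg _)
  have hfin := squeeze_zero' hnn hub (by simpa using hg0.add hΨ)
  exact hfin
end
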